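/- arXiv:1309.7649 — 2 statements merged into one kernel-verified Lean document; each statement's English description precedes it below -/
import Mathlib

section
/- Let p ∈ (0,1], let X, Y, Z be p-Banach spaces, let u : X → Y be a linear isometry and let v : X → Z be a nonexpansive linear operator. Then there exist a p-Banach space W, a linear isometry u' : Z → W and a nonexpansive linear operator v' : Y → W such that v' (u x) = u' (v x) for every x ∈ X (the push-out property for p-Banach spaces: if the top arrow of a push-out square is an isometry and the left arrow is nonexpansive, the bottom arrow is an isometry). -/
/- Common framework: p-normed and p-Banach spaces, following the paper's definitions. -/

namespace PGurarii

/-- A `p`-norm on a real vector space: `N x = 0 ↔ x = 0`, absolute homogeneity, and the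
`p`-triangle inequality `N (x + y) ^ p ≤ N x ^ p + N y ^ p` (values in `ℝ₊`). -/
structure PNorm (p : ℝ) (X : Type) [AddCommGroup X] [Module ℝ X] where
  N : X → ℝ
  nonneg : ∀ x : X, 0 ≤ N x
  eq_zero_iff : ∀ x : X, N x = 0 ↔ x = 0
  smul_eq : ∀ (a : ℝ) (x : X), N (a • x) = |a| * N x
  add_pow_le : ∀ x y : X, N (x + y) ^ p ≤ N x ^ p + N y ^ p

/-- Completeness (sequential) for the induced metric `d(x,y) = N (x - y) ^ p`. -/
def IsCompleteP (p : ℝ) {X : Type} [AddCommGroup X] [Module ℝ X] (NX : PNorm p X) : Prop :=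
  ∀ u : ℕ → X,
    (∀ ε : ℝ, 0 < ε → ∃ n₀ : ℕ, ∀ m ≥ n₀, ∀ n ≥ n₀, NX.N (u m - u n) ^ p < ε) →
    ∃ x : X, ∀ ε : ℝ, 0 < ε → ∃ n₀ : ℕ, ∀ n ≥ n₀, NX.N (u n - x) ^ p < ε

/-- Separability for the induced metric topology. -/
def IsSeparableP (p : ℝ) {X : Type} [AddCommGroup X] [Module ℝ X] (NX : PNorm p X) : Prop :=
  ∃ D : Set X, D.Countable ∧ ∀ x : X, ∀ ε : ℝ, 0 < ε → ∃ y ∈ D, NX.N (x - y) ^ p < ε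

/-- A subspace is closed for the induced metric topology. -/
def IsClosedSubP (p : ℝ) {X : Type} [AddCommGroup X] [Module ℝ X] (NX : PNorm p X)
    (S : Submodule ℝ X) : Prop :=
  ∀ x : X, (∀ ε : ℝ, 0 < ε → ∃ y ∈ S, NX.N (x - y) ^ p < ε) → x ∈ S

/-- The restriction of a `p`-norm to a subspace. -/
def PNorm.restrict {p : ℝ} {X : Type} [AddCommGroup X] [Module ℝ X]
    (NX : PNorm p X) (S : Submodule ℝ X) : PNorm p S where
  N x := NX.N x
  nonneg x := NX.nonneg x
  eq_zero_iff x := by rw [NX.eq_zero_iff]; exact ZeroMemClass.coe_eq_zero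
  smul_eq a x := NX.smul_eq a x
  add_pow_le x y := NX.add_pow_le x y

/-- A `p`-Banach space: a real vector space with a `p`-norm, complete for the induced metric. -/
structure PBanach (p : ℝ) where
  carrier : Type
  [addCommGroup : AddCommGroup carrier]
  [module : Module ℝ carrier]
  pnorm : PNorm p carrier
  complete : IsCompleteP p pnorm

attribute [instance] PBanach.addCommGroup PBanach.module

/-- `U` is of almost universal disposition for finite-dimensional `p`-Banach spaces: for every
`ε > 0`, every isometry from a subspace `X` of `U` (with the restricted `p`-norm) into a
finite-dimensional `p`-Banach space `Y` extends, after an `ε`-isometry `Y → U`, the inclusion. -/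
def AUD (p : ℝ) (U : Type) [AddCommGroup U] [Module ℝ U] (NU : PNorm p U) : Prop :=
  ∀ ε : ℝ, 0 < ε → ∀ Y : PBanach p, FiniteDimensional ℝ Y.carrier →
    ∀ (Xs : Submodule ℝ U) (g : Xs →ₗ[ℝ] Y.carrier),
      (∀ x : Xs, Y.pnorm.N (g x) = NU.N (x : U)) →
      ∃ f : Y.carrier →ₗ[ℝ] U,
        (∀ y, (1 - ε) * Y.pnorm.N y ≤ NU.N (f y) ∧ NU.N (f y) ≤ (1 + ε) * Y.pnorm.N y) ∧
        ∀ x : Xs, f (g x) = (x : U)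

/-- `U` is of universal disposition for separable `p`-Banach spaces. -/
def UD (p : ℝ) (U : Type) [AddCommGroup U] [Module ℝ U] (NU : PNorm p U) : Prop :=
  ∀ Y : PBanach p, IsSeparableP p Y.pnorm →
    ∀ (Xs : Submodule ℝ U), IsClosedSubP p NU Xs →
      ∀ g : Xs →ₗ[ℝ] Y.carrier, (∀ x : Xs, Y.pnorm.N (g x) = NU.N (x : U)) →
        ∃ f : Y.carrier →ₗ[ℝ] U, (∀ y, NU.N (f y) = Y.pnorm.N y) ∧ ∀ x : Xs, f (g x) = (x : U)

end PGurarii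

namespace PGurarii

section PushoutAux

variable {p : ℝ}

lemma PNorm.N_zero' {X : Type} [AddCommGroup X] [Module ℝ X] (NX : PNorm p X) : NX.N 0 = 0 :=
  (NX.eq_zero_iff 0).2 rfl

lemma PNorm.N_neg' {X : Type} [AddCommGroup X] [Module ℝ X] (NX : PNorm p X) (x : X) :
    NX.N (-x) = NX.N x := by
  have := NX.smul_eq (-1) x; simpa using this

/-- The product `p`-norm. -/
noncomputable def prodPNorm (hp0 : 0 < p) {Y Z : Type} [AddCommGroup Y] [Module ℝ Y]
    [AddCommGroup Z] [Module ℝ Z] (NY : PNorm p Y) (NZ : PNorm p Z) : PNorm p (Y × Z) where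
  N q := (NY.N q.1 ^ p + NZ.N q.2 ^ p) ^ p⁻¹
  nonneg q := Real.rpow_nonneg
    (add_nonneg (Real.rpow_nonneg (NY.nonneg _) p) (Real.rpow_nonneg (NZ.nonneg _) p)) _
  eq_zero_iff q := by
    show (NY.N q.1 ^ p + NZ.N q.2 ^ p) ^ p⁻¹ = 0 ↔ _
    rw [Real.rpow_eq_zero
      (add_nonneg (Real.rpow_nonneg (NY.nonneg _) p) (Real.rpow_nonneg (NZ.nonneg _) p))
      (inv_ne_zero hp0.ne'),
      add_eq_zero_iff_of_nonneg (Real.rpow_nonneg (NY.nonneg _) p)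
        (Real.rpow_nonneg (NZ.nonneg _) p),
      Real.rpow_eq_zero (NY.nonneg _) hp0.ne', Real.rpow_eq_zero (NZ.nonneg _) hp0.ne',
      NY.eq_zero_iff, NZ.eq_zero_iff, Prod.ext_iff]
    rfl
  smul_eq a q := by
    show (NY.N ((a • q).1) ^ p + NZ.N ((a • q).2) ^ p) ^ p⁻¹
      = |a| * (NY.N q.1 ^ p + NZ.N q.2 ^ p) ^ p⁻¹
    have h1 : NY.N ((a • q).1) = |a| * NY.N q.1 := NY.smul_eq a q.1
    have h2 : NZ.N ((a • q).2) = |a| * NZ.N q.2 := NZ.smul_eq a q.2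
    rw [h1, h2, Real.mul_rpow (abs_nonneg a) (NY.nonneg _),
      Real.mul_rpow (abs_nonneg a) (NZ.nonneg _), ← mul_add,
      Real.mul_rpow (Real.rpow_nonneg (abs_nonneg a) p)
        (add_nonneg (Real.rpow_nonneg (NY.nonneg _) p) (Real.rpow_nonneg (NZ.nonneg _) p)),
      Real.rpow_rpow_inv (abs_nonneg a) hp0.ne']
  add_pow_le q r := by
    show (((NY.N ((q+r).1) ^ p + NZ.N ((q+r).2) ^ p) ^ p⁻¹ : ℝ)) ^ p
      ≤ ((NY.N q.1 ^ p + NZ.N q.2 ^ p) ^ p⁻¹) ^ p + ((NY.N r.1 ^ p + NZ.N r.2 ^ p) ^ p⁻¹) ^ p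
    rw [Real.rpow_inv_rpow (add_nonneg (Real.rpow_nonneg (NY.nonneg _) p)
        (Real.rpow_nonneg (NZ.nonneg _) p)) hp0.ne',
      Real.rpow_inv_rpow (add_nonneg (Real.rpow_nonneg (NY.nonneg _) p)
        (Real.rpow_nonneg (NZ.nonneg _) p)) hp0.ne',
      Real.rpow_inv_rpow (add_nonneg (Real.rpow_nonneg (NY.nonneg _) p)
        (Real.rpow_nonneg (NZ.nonneg _) p)) hp0.ne']
    have h1 := NY.add_pow_le q.1 r.1
    have h2 := NZ.add_pow_le q.2 r.2
    show NY.N (q.1 + r.1) ^ p + NZ.N (q.2 + r.2) ^ p ≤ _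
    linarith

lemma prodPNorm_pow (hp0 : 0 < p) {Y Z : Type} [AddCommGroup Y] [Module ℝ Y] [AddCommGroup Z]
    [Module ℝ Z] (NY : PNorm p Y) (NZ : PNorm p Z) (q : Y × Z) :
    (prodPNorm hp0 NY NZ).N q ^ p = NY.N q.1 ^ p + NZ.N q.2 ^ p :=
  Real.rpow_inv_rpow (add_nonneg (Real.rpow_nonneg (NY.nonneg _) p)
    (Real.rpow_nonneg (NZ.nonneg _) p)) hp0.ne'

lemma prod_complete (hp0 : 0 < p) {Y Z : Type} [AddCommGroup Y] [Module ℝ Y] [AddCommGroup Z]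
    [Module ℝ Z] (NY : PNorm p Y) (NZ : PNorm p Z) (hY : IsCompleteP p NY)
    (hZ : IsCompleteP p NZ) : IsCompleteP p (prodPNorm hp0 NY NZ) := by
  intro q hq
  have hq1 : ∀ ε : ℝ, 0 < ε → ∃ n₀ : ℕ, ∀ m ≥ n₀, ∀ n ≥ n₀,
      NY.N ((fun j => (q j).1) m - (fun j => (q j).1) n) ^ p < ε := by
    intro ε hε
    obtain ⟨n₀, h⟩ := hq ε hε
    refine ⟨n₀, fun m hm n hn => ?_⟩
    have h2 := h m hm n hn
    rw [prodPNorm_pow hp0 NY NZ] at h2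
    have e1 : (q m - q n).1 = (q m).1 - (q n).1 := rfl
    have hnn : (0:ℝ) ≤ NZ.N ((q m - q n).2) ^ p := Real.rpow_nonneg (NZ.nonneg _) p
    rw [← e1]
    linarith
  have hq2 : ∀ ε : ℝ, 0 < ε → ∃ n₀ : ℕ, ∀ m ≥ n₀, ∀ n ≥ n₀,
      NZ.N ((fun j => (q j).2) m - (fun j => (q j).2) n) ^ p < ε := by
    intro ε hε
    obtain ⟨n₀, h⟩ := hq ε hε
    refine ⟨n₀, fun m hm n hn => ?_⟩
    have h2 := h m hm n hn
    rw [prodPNorm_pow hp0 NY NZ] at h2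
    have e2 : (q m - q n).2 = (q m).2 - (q n).2 := rfl
    have hnn : (0:ℝ) ≤ NY.N ((q m - q n).1) ^ p := Real.rpow_nonneg (NY.nonneg _) p
    rw [← e2]
    linarith
  obtain ⟨y, hy⟩ := hY _ hq1
  obtain ⟨z, hz⟩ := hZ _ hq2
  refine ⟨(y, z), fun ε hε => ?_⟩
  obtain ⟨n₁, h1⟩ := hy (ε / 2) (half_pos hε)
  obtain ⟨n₂, h2⟩ := hz (ε / 2) (half_pos hε)
  refine ⟨max n₁ n₂, fun n hn => ?_⟩
  rw [prodPNorm_pow hp0 NY NZ]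
  have e1 : (q n - (y, z)).1 = (q n).1 - y := rfl
  have e2 : (q n - (y, z)).2 = (q n).2 - z := rfl
  rw [e1, e2]
  have := h1 n (le_trans (le_max_left _ _) hn)
  have := h2 n (le_trans (le_max_right _ _) hn)
  linarith

section Quot

variable {P : Type} [AddCommGroup P] [Module ℝ P]

/-- Infimum of `N q ^ p` over representatives of a coset. -/
noncomputable def quotN (NP : PNorm p P) (D : Submodule ℝ P) (w : P ⧸ D) : ℝ :=
  sInf ((fun q => NP.N q ^ p) '' {q : P | (Submodule.Quotient.mk q : P ⧸ D) = w})

variable (NP : PNorm p P) (D : Submodule ℝ P)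

lemma quotN_set_nonempty (w : P ⧸ D) :
    ((fun q => NP.N q ^ p) '' {q : P | (Submodule.Quotient.mk q : P ⧸ D) = w}).Nonempty := by
  obtain ⟨q, hq⟩ := Submodule.Quotient.mk_surjective D w
  exact ⟨NP.N q ^ p, q, hq, rfl⟩

lemma quotN_bdd (w : P ⧸ D) :
    BddBelow ((fun q => NP.N q ^ p) '' {q : P | (Submodule.Quotient.mk q : P ⧸ D) = w}) := by
  refine ⟨0, ?_⟩
  rintro t ⟨q, -, rfl⟩
  exact Real.rpow_nonneg (NP.nonneg q) p

lemma quotN_nonneg (w : P ⧸ D) : 0 ≤ quotN NP D w :=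
  le_csInf (quotN_set_nonempty NP D w)
    (by rintro t ⟨q, -, rfl⟩; exact Real.rpow_nonneg (NP.nonneg q) p)

lemma quotN_le {w : P ⧸ D} {q : P} (hq : (Submodule.Quotient.mk q : P ⧸ D) = w) :
    quotN NP D w ≤ NP.N q ^ p :=
  csInf_le (quotN_bdd NP D w) ⟨q, hq, rfl⟩

lemma quotN_exists_rep (w : P ⧸ D) {ε : ℝ} (hε : 0 < ε) :
    ∃ q : P, (Submodule.Quotient.mk q : P ⧸ D) = w ∧ NP.N q ^ p < quotN NP D w + ε := by
  obtain ⟨t, ⟨q, hq, rfl⟩, ht⟩ := Real.lt_sInf_add_pos (quotN_set_nonempty NP D w) hε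
  exact ⟨q, hq, ht⟩

lemma quotN_add_le (w w' : P ⧸ D) : quotN NP D (w + w') ≤ quotN NP D w + quotN NP D w' := by
  refine le_of_forall_pos_le_add fun ε hε => ?_
  obtain ⟨q, hq, h1⟩ := quotN_exists_rep NP D w (half_pos hε)
  obtain ⟨q', hq', h2⟩ := quotN_exists_rep NP D w' (half_pos hε)
  have hmk : (Submodule.Quotient.mk (q + q') : P ⧸ D) = w + w' := by
    rw [Submodule.Quotient.mk_add, hq, hq']
  calc quotN NP D (w + w') ≤ NP.N (q + q') ^ p := quotN_le NP D hmk
    _ ≤ NP.N q ^ p + NP.N q' ^ p := NP.add_pow_le q q'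
    _ ≤ quotN NP D w + quotN NP D w' + ε := by linarith

lemma quotN_zero (hp0 : 0 < p) : quotN NP D 0 = 0 := by
  refine le_antisymm ?_ (quotN_nonneg NP D 0)
  have h := quotN_le NP D (w := 0) (q := 0) (by simp)
  rwa [PNorm.N_zero', Real.zero_rpow hp0.ne'] at h

lemma quotN_smul_le (a : ℝ) (w : P ⧸ D) : quotN NP D (a • w) ≤ |a| ^ p * quotN NP D w := by
  refine le_of_forall_pos_le_add fun ε hε => ?_
  have hc : (0:ℝ) ≤ |a| ^ p := Real.rpow_nonneg (abs_nonneg a) p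
  have hδ : 0 < ε / (|a| ^ p + 1) := div_pos hε (by linarith)
  obtain ⟨q, hq, h1⟩ := quotN_exists_rep NP D w hδ
  have hmk : (Submodule.Quotient.mk (a • q) : P ⧸ D) = a • w := by
    rw [Submodule.Quotient.mk_smul, hq]
  have key : NP.N (a • q) ^ p = |a| ^ p * NP.N q ^ p := by
    rw [NP.smul_eq, Real.mul_rpow (abs_nonneg a) (NP.nonneg q)]
  have hd : |a| ^ p * (ε / (|a| ^ p + 1)) ≤ ε := by
    rw [mul_div_assoc', div_le_iff₀ (by linarith)]
    nlinarith
  calc quotN NP D (a • w) ≤ NP.N (a • q) ^ p := quotN_le NP D hmk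
    _ = |a| ^ p * NP.N q ^ p := key
    _ ≤ |a| ^ p * (quotN NP D w + ε / (|a| ^ p + 1)) :=
        mul_le_mul_of_nonneg_left (le_of_lt h1) hc
    _ ≤ |a| ^ p * quotN NP D w + ε := by rw [mul_add]; linarith

lemma quotN_smul (hp0 : 0 < p) (a : ℝ) (w : P ⧸ D) :
    quotN NP D (a • w) = |a| ^ p * quotN NP D w := by
  rcases eq_or_ne a 0 with rfl | ha
  · simp [quotN_zero NP D hp0, Real.zero_rpow hp0.ne']
  · refine le_antisymm (quotN_smul_le NP D a w) ?_
    have h := quotN_smul_le NP D a⁻¹ (a • w)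
    rw [inv_smul_smul₀ ha, abs_inv, Real.inv_rpow (abs_nonneg a)] at h
    have hpos : (0:ℝ) < |a| ^ p := Real.rpow_pos_of_pos (abs_pos.2 ha) p
    calc |a| ^ p * quotN NP D w ≤ |a| ^ p * ((|a| ^ p)⁻¹ * quotN NP D (a • w)) :=
          mul_le_mul_of_nonneg_left h hpos.le
      _ = quotN NP D (a • w) := by field_simp

/-- The quotient `p`-norm by a closed submodule. -/
noncomputable def quotPNorm (hp0 : 0 < p) (hD : IsClosedSubP p NP D) : PNorm p (P ⧸ D) where
  N w := quotN NP D w ^ p⁻¹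
  nonneg w := Real.rpow_nonneg (quotN_nonneg NP D w) _
  eq_zero_iff w := by
    show quotN NP D w ^ p⁻¹ = 0 ↔ w = 0
    rw [Real.rpow_eq_zero (quotN_nonneg NP D w) (inv_ne_zero hp0.ne')]
    constructor
    · intro h
      obtain ⟨q₀, hq₀⟩ := Submodule.Quotient.mk_surjective D w
      have hmem : q₀ ∈ D := by
        refine hD q₀ fun ε hε => ?_
        obtain ⟨q, hq, hlt⟩ := quotN_exists_rep NP D w hε
        rw [h, zero_add] at hlt
        refine ⟨q₀ - q, ?_, ?_⟩
        · exact (Submodule.Quotient.eq D).1 (hq₀.trans hq.symm)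
        · simpa using hlt
      rw [← hq₀, Submodule.Quotient.mk_eq_zero]
      exact hmem
    · rintro rfl; exact quotN_zero NP D hp0
  smul_eq a w := by
    show quotN NP D (a • w) ^ p⁻¹ = |a| * quotN NP D w ^ p⁻¹
    rw [quotN_smul NP D hp0, Real.mul_rpow (Real.rpow_nonneg (abs_nonneg a) p)
      (quotN_nonneg NP D w), Real.rpow_rpow_inv (abs_nonneg a) hp0.ne']
  add_pow_le w w' := by
    show (quotN NP D (w + w') ^ p⁻¹) ^ p ≤ (quotN NP D w ^ p⁻¹) ^ p + (quotN NP D w' ^ p⁻¹) ^ p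
    rw [Real.rpow_inv_rpow (quotN_nonneg NP D _) hp0.ne',
      Real.rpow_inv_rpow (quotN_nonneg NP D _) hp0.ne',
      Real.rpow_inv_rpow (quotN_nonneg NP D _) hp0.ne']
    exact quotN_add_le NP D w w'

lemma quotPNorm_pow (hp0 : 0 < p) (hD : IsClosedSubP p NP D) (w : P ⧸ D) :
    (quotPNorm NP D hp0 hD).N w ^ p = quotN NP D w :=
  Real.rpow_inv_rpow (quotN_nonneg NP D w) hp0.ne'

lemma geom_Ico_eq {k l : ℕ} (h : k ≤ l) :
    ∑ j ∈ Finset.Ico k l, ((2:ℝ)⁻¹) ^ j = 2 * (2⁻¹) ^ k - 2 * (2⁻¹) ^ l := by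
  induction l, h using Nat.le_induction with
  | base => simp
  | succ l hl ih =>
      rw [Finset.sum_Ico_succ_top hl, ih, pow_succ]
      ring

lemma geom_Ico_le (k l : ℕ) : ∑ j ∈ Finset.Ico k l, ((2:ℝ)⁻¹) ^ j ≤ 2 * (2⁻¹) ^ k := by
  rcases le_total k l with h | h
  · rw [geom_Ico_eq h]
    have : (0:ℝ) ≤ 2 * (2⁻¹) ^ l := by positivity
    linarith
  · rw [Finset.Ico_eq_empty (by omega)]
    simp only [Finset.sum_empty]
    positivity

lemma half_pow_lt {ε : ℝ} (hε : 0 < ε) : ∃ k : ℕ, ((2:ℝ)⁻¹) ^ k < ε :=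
  exists_pow_lt_of_lt_one hε (by norm_num)

lemma half_pow_anti {k l : ℕ} (h : k ≤ l) : ((2:ℝ)⁻¹) ^ l ≤ (2⁻¹) ^ k :=
  pow_le_pow_of_le_one (by norm_num) (by norm_num) h

lemma quot_complete (hp0 : 0 < p) (hD : IsClosedSubP p NP D) (hP : IsCompleteP p NP) :
    IsCompleteP p (quotPNorm NP D hp0 hD) := by
  intro w hw
  have hw' : ∀ k : ℕ, ∃ n₀ : ℕ, ∀ m ≥ n₀, ∀ n ≥ n₀,
      quotN NP D (w m - w n) < ((2:ℝ)⁻¹) ^ k := by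
    intro k
    obtain ⟨n₀, h⟩ := hw (((2:ℝ)⁻¹) ^ k) (by positivity)
    refine ⟨n₀, fun m hm n hn => ?_⟩
    have h2 := h m hm n hn
    rwa [quotPNorm_pow NP D hp0 hD] at h2
  choose g hg using hw'
  let n : ℕ → ℕ := fun k => Nat.rec (g 0) (fun k ih => max ih (g (k + 1))) k
  have hndef : ∀ k, n (k + 1) = max (n k) (g (k + 1)) := fun k => rfl
  have hmono : ∀ k, n k ≤ n (k + 1) := fun k => by rw [hndef]; exact le_max_left _ _
  have hge : ∀ k, g k ≤ n k := by
    intro k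
    cases k with
    | zero => exact le_rfl
    | succ k => rw [hndef]; exact le_max_right _ _
  have hn : ∀ k, ∀ m ≥ n k, ∀ m' ≥ n k, quotN NP D (w m - w m') < ((2:ℝ)⁻¹) ^ k :=
    fun k m hm m' hm' => hg k m (le_trans (hge k) hm) m' (le_trans (hge k) hm')
  have hrec : ∀ k : ℕ, ∃ r : P,
      (Submodule.Quotient.mk r : P ⧸ D) = w (n (k + 1)) - w (n k) ∧
      NP.N r ^ p < ((2:ℝ)⁻¹) ^ k := by
    intro k
    have h1 : quotN NP D (w (n (k + 1)) - w (n k)) < ((2:ℝ)⁻¹) ^ k :=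
      hn k _ (hmono k) _ le_rfl
    obtain ⟨t, ⟨r, hr, rfl⟩, ht⟩ := exists_lt_of_csInf_lt (quotN_set_nonempty NP D _) h1
    exact ⟨r, hr, ht⟩
  choose r hr1 hr2 using hrec
  obtain ⟨q0, hq0⟩ := Submodule.Quotient.mk_surjective D (w (n 0))
  let q : ℕ → P := fun k => Nat.rec q0 (fun k ih => ih + r k) k
  have hqdef : ∀ k, q (k + 1) = q k + r k := fun k => rfl
  have hqmk : ∀ k, (Submodule.Quotient.mk (q k) : P ⧸ D) = w (n k) := by
    intro k
    induction k with
    | zero => exact hq0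
    | succ k ih =>
        rw [hqdef, Submodule.Quotient.mk_add, ih, hr1 k]
        abel
  have hqdiff : ∀ k l : ℕ, k ≤ l →
      NP.N (q l - q k) ^ p ≤ ∑ j ∈ Finset.Ico k l, ((2:ℝ)⁻¹) ^ j := by
    intro k l h
    induction l, h using Nat.le_induction with
    | base => simp [sub_self, PNorm.N_zero', Real.zero_rpow hp0.ne']
    | succ l hl ih =>
        have e : q (l + 1) - q k = (q l - q k) + r l := by rw [hqdef]; abel
        calc NP.N (q (l + 1) - q k) ^ p = NP.N ((q l - q k) + r l) ^ p := by rw [e]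
          _ ≤ NP.N (q l - q k) ^ p + NP.N (r l) ^ p := NP.add_pow_le _ _
          _ ≤ (∑ j ∈ Finset.Ico k l, ((2:ℝ)⁻¹) ^ j) + (2⁻¹) ^ l := add_le_add ih (hr2 l).le
          _ = ∑ j ∈ Finset.Ico k (l + 1), ((2:ℝ)⁻¹) ^ j := (Finset.sum_Ico_succ_top hl _).symm
  have hqb : ∀ k l : ℕ, k ≤ l → NP.N (q l - q k) ^ p ≤ 2 * ((2:ℝ)⁻¹) ^ k :=
    fun k l h => le_trans (hqdiff k l h) (geom_Ico_le k l)
  have hqcauchy : ∀ ε : ℝ, 0 < ε → ∃ n₀ : ℕ, ∀ m ≥ n₀, ∀ n' ≥ n₀,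
      NP.N (q m - q n') ^ p < ε := by
    intro ε hε
    obtain ⟨k, hk⟩ := half_pow_lt (half_pos hε)
    refine ⟨k, fun m hm n' hn' => ?_⟩
    rcases le_total n' m with h | h
    · have hb := hqb n' m h
      have h2 : ((2:ℝ)⁻¹) ^ n' ≤ (2⁻¹) ^ k := half_pow_anti hn'
      linarith
    · have heq : NP.N (q m - q n') = NP.N (q n' - q m) := by
        rw [← PNorm.N_neg' NP (q n' - q m)]; congr 1; abel
      rw [heq]
      have hb := hqb m n' h
      have h2 : ((2:ℝ)⁻¹) ^ m ≤ (2⁻¹) ^ k := half_pow_anti hm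
      linarith
  obtain ⟨x, hx⟩ := hP q hqcauchy
  refine ⟨Submodule.Quotient.mk x, fun ε hε => ?_⟩
  obtain ⟨k1, hk1⟩ := half_pow_lt (half_pos hε)
  obtain ⟨k0, hk0⟩ := hx (ε / 2) (half_pos hε)
  set k := max k0 k1 with hkdef
  refine ⟨n k, fun m hm => ?_⟩
  rw [quotPNorm_pow NP D hp0 hD]
  have h1 : quotN NP D (w m - w (n k)) < ((2:ℝ)⁻¹) ^ k := hn k m hm _ le_rfl
  have h1' : ((2:ℝ)⁻¹) ^ k < ε / 2 := lt_of_le_of_lt (half_pow_anti (le_max_right k0 k1)) hk1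
  have h2 : quotN NP D (w (n k) - Submodule.Quotient.mk x) ≤ NP.N (q k - x) ^ p := by
    refine quotN_le NP D ?_
    rw [Submodule.Quotient.mk_sub, hqmk]
  have h3 : NP.N (q k - x) ^ p < ε / 2 := hk0 k (le_max_left _ _)
  have h4 : quotN NP D (w m - Submodule.Quotient.mk x)
      ≤ quotN NP D (w m - w (n k)) + quotN NP D (w (n k) - Submodule.Quotient.mk x) := by
    have := quotN_add_le NP D (w m - w (n k)) (w (n k) - Submodule.Quotient.mk x)
    rwa [sub_add_sub_cancel] at this
  linarith

end Quot

end PushoutAux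

end PGurarii

namespace PGurarii

/-- the push-out property for `p`-Banach spaces: given an isometry `u : X → Y` and a
nonexpansive operator `v : X → Z`, there are a `p`-Banach space `W`, an isometry `u' : Z → W`
and a nonexpansive operator `v' : Y → W` with `v' ∘ u = u' ∘ v`. -/
theorem statement3 (p : ℝ) (hp0 : 0 < p) (hp1 : p ≤ 1)
    (X Y Z : PBanach p)
    (u : X.carrier →ₗ[ℝ] Y.carrier) (hu : ∀ x, Y.pnorm.N (u x) = X.pnorm.N x)
    (v : X.carrier →ₗ[ℝ] Z.carrier) (hv : ∀ x, Z.pnorm.N (v x) ≤ X.pnorm.N x) :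
    ∃ (W : PBanach p) (u' : Z.carrier →ₗ[ℝ] W.carrier) (v' : Y.carrier →ₗ[ℝ] W.carrier),
      (∀ z, W.pnorm.N (u' z) = Z.pnorm.N z) ∧
      (∀ y, W.pnorm.N (v' y) ≤ Y.pnorm.N y) ∧
      ∀ x, v' (u x) = u' (v x) := by
  classical
  let NP := prodPNorm hp0 Y.pnorm Z.pnorm
  let F : X.carrier →ₗ[ℝ] Y.carrier × Z.carrier := LinearMap.prod u (-v)
  let D : Submodule ℝ (Y.carrier × Z.carrier) := LinearMap.range F
  have hFx : ∀ x : X.carrier, NP.N (F x) ^ p ≤ 2 * X.pnorm.N x ^ p := by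
    intro x
    rw [prodPNorm_pow hp0]
    have e1 : (F x).1 = u x := rfl
    have e2 : (F x).2 = -(v x) := rfl
    rw [e1, e2, PNorm.N_neg', hu]
    have hvp : Z.pnorm.N (v x) ^ p ≤ X.pnorm.N x ^ p :=
      Real.rpow_le_rpow (Z.pnorm.nonneg _) (hv x) hp0.le
    linarith
  have hD : IsClosedSubP p NP D := by
    intro q hq
    have hex : ∀ k : ℕ, ∃ x : X.carrier, NP.N (q - F x) ^ p < ((2:ℝ)⁻¹) ^ k := by
      intro k
      obtain ⟨d, hd, hdk⟩ := hq (((2:ℝ)⁻¹) ^ k) (by positivity)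
      obtain ⟨x, hx⟩ := hd
      rw [← hx] at hdk
      exact ⟨x, hdk⟩
    choose xs hxs using hex
    have hcauchy : ∀ ε : ℝ, 0 < ε → ∃ n₀ : ℕ, ∀ m ≥ n₀, ∀ n' ≥ n₀,
        X.pnorm.N (xs m - xs n') ^ p < ε := by
      intro ε hε
      obtain ⟨k, hk⟩ := half_pow_lt (half_pos hε)
      refine ⟨k, fun m hm n' hn' => ?_⟩
      have key : X.pnorm.N (xs m - xs n') ^ p ≤ NP.N (F (xs m) - F (xs n')) ^ p := by
        have e : F (xs m) - F (xs n') = F (xs m - xs n') := (map_sub F _ _).symm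
        rw [e, prodPNorm_pow hp0]
        have e1 : (F (xs m - xs n')).1 = u (xs m - xs n') := rfl
        rw [e1, hu]
        exact le_add_of_nonneg_right (Real.rpow_nonneg (Z.pnorm.nonneg _) p)
      have tri : NP.N (F (xs m) - F (xs n')) ^ p
          ≤ NP.N (F (xs m) - q) ^ p + NP.N (q - F (xs n')) ^ p := by
        have e : F (xs m) - F (xs n') = (F (xs m) - q) + (q - F (xs n')) := by abel
        rw [e]; exact NP.add_pow_le _ _
      have hm' : NP.N (F (xs m) - q) = NP.N (q - F (xs m)) := by
        rw [← PNorm.N_neg' NP (q - F (xs m))]; congr 1; abel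
      have b1 : NP.N (F (xs m) - q) ^ p < ((2:ℝ)⁻¹) ^ m := by rw [hm']; exact hxs m
      have b2 := hxs n'
      have p1 : ((2:ℝ)⁻¹) ^ m ≤ (2⁻¹) ^ k := half_pow_anti hm
      have p2 : ((2:ℝ)⁻¹) ^ n' ≤ (2⁻¹) ^ k := half_pow_anti hn'
      linarith
    obtain ⟨x, hxlim⟩ := X.complete xs hcauchy
    have hsmall : ∀ ε : ℝ, 0 < ε → NP.N (q - F x) ^ p < ε := by
      intro ε hε
      obtain ⟨k, hk⟩ := half_pow_lt (show (0:ℝ) < ε / 4 by linarith)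
      obtain ⟨n₀, hlim⟩ := hxlim (ε / 4) (by linarith)
      set m := max k n₀ with hmdef
      have tri : NP.N (q - F x) ^ p ≤ NP.N (q - F (xs m)) ^ p + NP.N (F (xs m) - F x) ^ p := by
        have e : q - F x = (q - F (xs m)) + (F (xs m) - F x) := by abel
        rw [e]; exact NP.add_pow_le _ _
      have b1 : NP.N (q - F (xs m)) ^ p < ((2:ℝ)⁻¹) ^ k :=
        lt_of_lt_of_le (hxs m) (half_pow_anti (le_max_left _ _))
      have b2 : NP.N (F (xs m) - F x) ^ p ≤ 2 * X.pnorm.N (xs m - x) ^ p := by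
        rw [← map_sub]; exact hFx _
      have b3 : X.pnorm.N (xs m - x) ^ p < ε / 4 := hlim m (le_max_right _ _)
      linarith
    have h0 : NP.N (q - F x) = 0 := by
      have ha : NP.N (q - F x) ^ p ≤ 0 := by
        by_contra hlt
        push_neg at hlt
        exact absurd (hsmall _ hlt) (lt_irrefl _)
      have hb := le_antisymm ha (Real.rpow_nonneg (NP.nonneg _) p)
      exact (Real.rpow_eq_zero (NP.nonneg _) hp0.ne').1 hb
    have hqf : q = F x := by
      have := (NP.eq_zero_iff _).1 h0
      rwa [sub_eq_zero] at this
    exact hqf ▸ ⟨x, rfl⟩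
  let NW := quotPNorm NP D hp0 hD
  have hWcomp : IsCompleteP p NW :=
    quot_complete NP D hp0 hD (prod_complete hp0 _ _ Y.complete Z.complete)
  refine ⟨⟨(Y.carrier × Z.carrier) ⧸ D, NW, hWcomp⟩,
    D.mkQ.comp (LinearMap.inr ℝ Y.carrier Z.carrier),
    D.mkQ.comp (LinearMap.inl ℝ Y.carrier Z.carrier), ?_, ?_, ?_⟩
  · intro z
    show NW.N (Submodule.Quotient.mk ((0:Y.carrier), z)) = Z.pnorm.N z
    have hq' : quotN NP D (Submodule.Quotient.mk ((0:Y.carrier), z)) = Z.pnorm.N z ^ p := by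
      refine le_antisymm ?_ ?_
      · have h := quotN_le NP D
          (w := (Submodule.Quotient.mk ((0:Y.carrier), z) : _ ⧸ D)) (q := (0, z)) rfl
        rwa [prodPNorm_pow hp0, show (((0:Y.carrier), z)).1 = 0 from rfl,
          show (((0:Y.carrier), z)).2 = z from rfl, PNorm.N_zero', Real.zero_rpow hp0.ne',
          zero_add] at h
      · refine le_csInf (quotN_set_nonempty NP D _) ?_
        rintro t ⟨q, hq, rfl⟩
        have hmem : q - ((0:Y.carrier), z) ∈ D := (Submodule.Quotient.eq D).1 hq
        obtain ⟨x, hx⟩ := hmem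
        have h1 : u x = q.1 - 0 := congrArg Prod.fst hx
        have e1 : q.1 = u x := by rw [h1, sub_zero]
        have h2 : q.2 - z = -(v x) := (congrArg Prod.snd hx).symm
        have e2 : q.2 = z - v x := by
          have h3 := sub_eq_iff_eq_add.1 h2
          rw [h3]; abel
        show Z.pnorm.N z ^ p ≤ NP.N q ^ p
        rw [prodPNorm_pow hp0, e1, e2, hu]
        have t1 : Z.pnorm.N z ^ p ≤ Z.pnorm.N (v x) ^ p + Z.pnorm.N (z - v x) ^ p := by
          have e : z = v x + (z - v x) := by abel
          calc Z.pnorm.N z ^ p = Z.pnorm.N (v x + (z - v x)) ^ p := by rw [← e]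
            _ ≤ _ := Z.pnorm.add_pow_le _ _
        have t2 : Z.pnorm.N (v x) ^ p ≤ X.pnorm.N x ^ p :=
          Real.rpow_le_rpow (Z.pnorm.nonneg _) (hv x) hp0.le
        linarith
    show quotN NP D (Submodule.Quotient.mk ((0:Y.carrier), z)) ^ p⁻¹ = Z.pnorm.N z
    rw [hq', Real.rpow_rpow_inv (Z.pnorm.nonneg z) hp0.ne']
  · intro y
    show NW.N (Submodule.Quotient.mk (y, (0:Z.carrier))) ≤ Y.pnorm.N y
    have hle : quotN NP D (Submodule.Quotient.mk (y, (0:Z.carrier))) ≤ Y.pnorm.N y ^ p := by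
      have h := quotN_le NP D
        (w := (Submodule.Quotient.mk (y, (0:Z.carrier)) : _ ⧸ D)) (q := (y, 0)) rfl
      rwa [prodPNorm_pow hp0, show ((y, (0:Z.carrier))).2 = 0 from rfl,
        show ((y, (0:Z.carrier))).1 = y from rfl, PNorm.N_zero', Real.zero_rpow hp0.ne',
        add_zero] at h
    calc NW.N (Submodule.Quotient.mk (y, (0:Z.carrier)))
        = quotN NP D (Submodule.Quotient.mk (y, (0:Z.carrier))) ^ p⁻¹ := rfl
      _ ≤ (Y.pnorm.N y ^ p) ^ p⁻¹ :=
          Real.rpow_le_rpow (quotN_nonneg NP D _) hle (inv_nonneg.2 hp0.le)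
      _ = Y.pnorm.N y := Real.rpow_rpow_inv (Y.pnorm.nonneg y) hp0.ne'
  · intro x
    show (Submodule.Quotient.mk (u x, (0:Z.carrier)) : _ ⧸ D)
        = Submodule.Quotient.mk ((0:Y.carrier), v x)
    rw [Submodule.Quotient.eq]
    refine ⟨x, ?_⟩
    show (u x, -(v x)) = (u x, (0:Z.carrier)) - ((0:Y.carrier), v x)
    apply Prod.ext <;> simp


end PGurarii
end

section
/- Let p ∈ (0,1], let E be a p-Banach space, let Γ be an index set and, for each γ ∈ Γ, let A γ and B γ be p-Banach spaces, u γ : A γ → B γ a linear isometry, and f γ : A γ → E a nonexpansive linear operator. Then there exist a p-Banach space E' and a linear isometry ι : E → E' such that for every γ ∈ Γ there is a nonexpansive linear operator f'_γ : B γ → E' with f'_γ (u γ a) = ι (f γ a) for all a ∈ A γ; moreover, for any ε ∈ [0,1), if f γ is an ε-isometry then f'_γ is an ε-isometry. -/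
namespace PGurarii

/-! Auxiliary lemmas about p-norms -/

variable {p : ℝ} {X : Type} [AddCommGroup X] [Module ℝ X]

lemma PNorm.zero' (NX : PNorm p X) : NX.N 0 = 0 := (NX.eq_zero_iff 0).mpr rfl

lemma PNorm.neg' (NX : PNorm p X) (x : X) : NX.N (-x) = NX.N x := by
  have := NX.smul_eq (-1) x
  simpa using this

lemma PNorm.rev_tri (hp0 : 0 < p) (NX : PNorm p X) (x y : X) :
    NX.N x ^ p ≤ NX.N (x - y) ^ p + NX.N y ^ p := by
  have := NX.add_pow_le (x - y) y
  simpa using this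

lemma PNorm.sub_comm' (NX : PNorm p X) (x y : X) : NX.N (x - y) = NX.N (y - x) := by
  rw [← PNorm.neg' NX (x - y)]; congr 1; abel

lemma PNorm.sum_le (hp0 : 0 < p) (NX : PNorm p X) {ι : Type*} (s : Finset ι) (g : ι → X) :
    NX.N (∑ i ∈ s, g i) ^ p ≤ ∑ i ∈ s, NX.N (g i) ^ p := by
  classical
  induction s using Finset.cons_induction with
  | empty => simp [PNorm.zero' NX, Real.zero_rpow hp0.ne']
  | cons a s ha ih =>
      rw [Finset.sum_cons, Finset.sum_cons]
      calc NX.N (g a + ∑ i ∈ s, g i) ^ p ≤ NX.N (g a) ^ p + NX.N (∑ i ∈ s, g i) ^ p :=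
            NX.add_pow_le _ _
        _ ≤ _ := by linarith

/-! The setup bundling all data. -/

structure Setup where
  p : ℝ
  hp0 : 0 < p
  hp1 : p ≤ 1
  E : PBanach p
  Γ : Type
  A : Γ → PBanach p
  B : Γ → PBanach p
  u : ∀ γ : Γ, (A γ).carrier →ₗ[ℝ] (B γ).carrier
  hu : ∀ (γ : Γ) (a : (A γ).carrier), (B γ).pnorm.N (u γ a) = (A γ).pnorm.N a
  f : ∀ γ : Γ, (A γ).carrier →ₗ[ℝ] E.carrier
  hf : ∀ (γ : Γ) (a : (A γ).carrier), E.pnorm.N (f γ a) ≤ (A γ).pnorm.N a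

namespace Setup

variable (S : Setup)

/-- The ℓ_p-sum `E ⊕_p (⊕_p B γ)` as a submodule of the full product. -/
def Dset : Submodule ℝ (S.E.carrier × ∀ γ, (S.B γ).carrier) where
  carrier := {x | Summable fun γ => (S.B γ).pnorm.N (x.2 γ) ^ S.p}
  add_mem' := by
    intro x y hx hy
    exact Summable.of_nonneg_of_le
      (fun γ => Real.rpow_nonneg ((S.B γ).pnorm.nonneg _) _)
      (fun γ => (S.B γ).pnorm.add_pow_le (x.2 γ) (y.2 γ))
      (hx.add hy)
  zero_mem' := by
    have : (fun γ => (S.B γ).pnorm.N ((0 : S.E.carrier × ∀ γ, (S.B γ).carrier).2 γ) ^ S.p)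
        = fun _ => (0 : ℝ) := by
      funext γ
      simp [PNorm.zero' (S.B γ).pnorm, Real.zero_rpow S.hp0.ne']
    rw [Set.mem_setOf_eq, this]
    exact summable_zero
  smul_mem' := by
    intro c x hx
    have : (fun γ => (S.B γ).pnorm.N ((c • x).2 γ) ^ S.p)
        = fun γ => |c| ^ S.p * (S.B γ).pnorm.N (x.2 γ) ^ S.p := by
      funext γ
      rw [show (c • x).2 γ = c • x.2 γ from rfl, (S.B γ).pnorm.smul_eq,
        Real.mul_rpow (abs_nonneg _) ((S.B γ).pnorm.nonneg _)]
    rw [Set.mem_setOf_eq, this]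
    exact hx.mul_left _

abbrev D := ↥S.Dset

lemma summ (x : S.D) : Summable fun γ => (S.B γ).pnorm.N (x.1.2 γ) ^ S.p := x.2

/-- `F x = N(x₁)^p + ∑ N(x₂ γ)^p`, the p-th power of the norm on `D`. -/
noncomputable def F (x : S.D) : ℝ := S.E.pnorm.N x.1.1 ^ S.p + ∑' γ, (S.B γ).pnorm.N (x.1.2 γ) ^ S.p

lemma F_nonneg (x : S.D) : 0 ≤ S.F x :=
  add_nonneg (Real.rpow_nonneg (S.E.pnorm.nonneg _) _)
    (tsum_nonneg fun γ => Real.rpow_nonneg ((S.B γ).pnorm.nonneg _) _)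

lemma coe_sub (x y : S.D) : ((x - y : S.D) : S.E.carrier × ∀ γ, (S.B γ).carrier) = x.1 - y.1 := rfl
lemma coe_add (x y : S.D) : ((x + y : S.D) : S.E.carrier × ∀ γ, (S.B γ).carrier) = x.1 + y.1 := rfl

lemma F_zero : S.F 0 = 0 := by
  unfold F
  rw [show (0 : S.D).1.1 = 0 from rfl, PNorm.zero' S.E.pnorm, Real.zero_rpow S.hp0.ne']
  rw [tsum_congr (fun γ => by
    rw [show (0 : S.D).1.2 γ = 0 from rfl, PNorm.zero' (S.B γ).pnorm,
      Real.zero_rpow S.hp0.ne']), tsum_zero]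
  norm_num

lemma F_add_le (x y : S.D) : S.F (x + y) ≤ S.F x + S.F y := by
  have h1 : S.E.pnorm.N ((x + y : S.D).1.1) ^ S.p
      ≤ S.E.pnorm.N x.1.1 ^ S.p + S.E.pnorm.N y.1.1 ^ S.p := S.E.pnorm.add_pow_le _ _
  have h2 : (∑' γ, (S.B γ).pnorm.N ((x + y : S.D).1.2 γ) ^ S.p)
      ≤ ∑' γ, ((S.B γ).pnorm.N (x.1.2 γ) ^ S.p + (S.B γ).pnorm.N (y.1.2 γ) ^ S.p) := by
    refine Summable.tsum_le_tsum (fun γ => (S.B γ).pnorm.add_pow_le _ _) (S.summ _) ?_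
    exact (S.summ x).add (S.summ y)
  rw [Summable.tsum_add (S.summ x) (S.summ y)] at h2
  unfold F
  linarith

lemma F_smul (c : ℝ) (x : S.D) : S.F (c • x) = |c| ^ S.p * S.F x := by
  have h1 : S.E.pnorm.N ((c • x : S.D).1.1) ^ S.p = |c| ^ S.p * S.E.pnorm.N x.1.1 ^ S.p := by
    rw [show (c • x : S.D).1.1 = c • x.1.1 from rfl, S.E.pnorm.smul_eq,
      Real.mul_rpow (abs_nonneg _) (S.E.pnorm.nonneg _)]
  have h2 : (fun γ => (S.B γ).pnorm.N ((c • x : S.D).1.2 γ) ^ S.p)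
      = fun γ => |c| ^ S.p * (S.B γ).pnorm.N (x.1.2 γ) ^ S.p := by
    funext γ
    rw [show (c • x : S.D).1.2 γ = c • x.1.2 γ from rfl, (S.B γ).pnorm.smul_eq,
      Real.mul_rpow (abs_nonneg _) ((S.B γ).pnorm.nonneg _)]
  unfold F
  rw [h1, h2, tsum_mul_left, mul_add]

lemma F_neg (x : S.D) : S.F (-x) = S.F x := by
  rw [← neg_one_smul ℝ x, S.F_smul]
  simp [Real.one_rpow]

lemma F_eq_zero_iff (x : S.D) : S.F x = 0 ↔ x = 0 := by
  constructor
  · intro h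
    have hE : S.E.pnorm.N x.1.1 ^ S.p = 0 ∧ (∑' γ, (S.B γ).pnorm.N (x.1.2 γ) ^ S.p) = 0 := by
      constructor <;> [skip; skip] <;>
      · have h1 := Real.rpow_nonneg (S.E.pnorm.nonneg x.1.1) S.p
        have h2 := tsum_nonneg (L := SummationFilter.unconditional _) fun γ => Real.rpow_nonneg ((S.B γ).pnorm.nonneg (x.1.2 γ)) S.p
        unfold F at h
        linarith
    have hx1 : x.1.1 = 0 := by
      have := (Real.rpow_eq_zero (S.E.pnorm.nonneg _) S.hp0.ne').mp hE.1
      exact (S.E.pnorm.eq_zero_iff _).mp this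
    have hx2 : ∀ γ, x.1.2 γ = 0 := by
      intro γ
      have hle : (S.B γ).pnorm.N (x.1.2 γ) ^ S.p ≤ 0 := by
        rw [← hE.2]
        exact Summable.le_tsum (S.summ x) γ fun γ' _ =>
          Real.rpow_nonneg ((S.B γ').pnorm.nonneg _) _
      have hge := Real.rpow_nonneg ((S.B γ).pnorm.nonneg (x.1.2 γ)) S.p
      have : (S.B γ).pnorm.N (x.1.2 γ) ^ S.p = 0 := le_antisymm hle hge
      exact ((S.B γ).pnorm.eq_zero_iff _).mp
        ((Real.rpow_eq_zero ((S.B γ).pnorm.nonneg _) S.hp0.ne').mp this)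
    ext
    · exact hx1
    · exact hx2 _
  · rintro rfl; exact S.F_zero

lemma F_coord1 (x : S.D) : S.E.pnorm.N x.1.1 ^ S.p ≤ S.F x :=
  le_add_of_nonneg_right (tsum_nonneg fun γ => Real.rpow_nonneg ((S.B γ).pnorm.nonneg _) _)

lemma F_coord2 (x : S.D) (γ : S.Γ) : (S.B γ).pnorm.N (x.1.2 γ) ^ S.p ≤ S.F x :=
  le_add_of_nonneg_left (Real.rpow_nonneg (S.E.pnorm.nonneg _) _) |>.trans
    (by
      have := Summable.le_tsum (S.summ x) γ fun γ' _ => Real.rpow_nonneg ((S.B γ').pnorm.nonneg _) _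
      unfold F
      have h1 := Real.rpow_nonneg (S.E.pnorm.nonneg x.1.1) S.p
      linarith)

/-- The p-norm on `D`. -/
noncomputable def ND : PNorm S.p S.D where
  N x := S.F x ^ (1 / S.p)
  nonneg x := Real.rpow_nonneg (S.F_nonneg x) _
  eq_zero_iff x := by
    show S.F x ^ (1 / S.p) = 0 ↔ x = 0
    rw [Real.rpow_eq_zero (S.F_nonneg x) (one_div_ne_zero S.hp0.ne'), S.F_eq_zero_iff]
  smul_eq a x := by
    show S.F (a • x) ^ (1 / S.p) = |a| * S.F x ^ (1 / S.p)
    rw [S.F_smul, Real.mul_rpow (Real.rpow_nonneg (abs_nonneg _) _) (S.F_nonneg x),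
      ← Real.rpow_mul (abs_nonneg a), mul_one_div_cancel S.hp0.ne', Real.rpow_one]
  add_pow_le x y := by
    show (S.F (x + y) ^ (1 / S.p)) ^ S.p ≤ (S.F x ^ (1 / S.p)) ^ S.p + (S.F y ^ (1 / S.p)) ^ S.p
    rw [← Real.rpow_mul (S.F_nonneg _), ← Real.rpow_mul (S.F_nonneg _),
      ← Real.rpow_mul (S.F_nonneg _), one_div_mul_cancel S.hp0.ne',
      Real.rpow_one, Real.rpow_one, Real.rpow_one]
    exact S.F_add_le x y

lemma ND_pow (x : S.D) : S.ND.N x ^ S.p = S.F x := by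
  show (S.F x ^ (1 / S.p)) ^ S.p = S.F x
  rw [← Real.rpow_mul (S.F_nonneg x), one_div_mul_cancel S.hp0.ne', Real.rpow_one]

end Setup

namespace Setup
variable (S : Setup)

/-- p-th powers of norms are "continuous": reverse triangle inequality. -/
lemma pow_diff_le {X : Type} [AddCommGroup X] [Module ℝ X] (NX : PNorm S.p X) (x y : X) :
    NX.N x ^ S.p ≤ NX.N (x - y) ^ S.p + NX.N y ^ S.p := PNorm.rev_tri S.hp0 NX x y

lemma D_complete : IsCompleteP S.p S.ND := by
  intro w hw
  -- rephrase Cauchy in terms of F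
  have hwF : ∀ ε : ℝ, 0 < ε → ∃ n₀ : ℕ, ∀ m ≥ n₀, ∀ n ≥ n₀, S.F (w m - w n) < ε := by
    intro ε hε
    obtain ⟨n₀, h⟩ := hw ε hε
    exact ⟨n₀, fun m hm n hn => by have := h m hm n hn; rwa [S.ND_pow] at this⟩
  -- coordinate limits
  have hE : ∃ x1 : S.E.carrier, ∀ ε : ℝ, 0 < ε → ∃ n₀ : ℕ, ∀ n ≥ n₀,
      S.E.pnorm.N ((w n).1.1 - x1) ^ S.p < ε := by
    apply S.E.complete
    intro ε hε
    obtain ⟨n₀, h⟩ := hwF ε hε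
    refine ⟨n₀, fun m hm n hn => ?_⟩
    have := S.F_coord1 (w m - w n)
    have h2 := h m hm n hn
    have : S.E.pnorm.N ((w m).1.1 - (w n).1.1) ^ S.p ≤ S.F (w m - w n) := by
      have e : (w m - w n : S.D).1.1 = (w m).1.1 - (w n).1.1 := rfl
      rw [← e]; exact S.F_coord1 _
    linarith
  obtain ⟨x1, hx1⟩ := hE
  have hB : ∀ γ : S.Γ, ∃ xγ : (S.B γ).carrier, ∀ ε : ℝ, 0 < ε → ∃ n₀ : ℕ, ∀ n ≥ n₀,
      (S.B γ).pnorm.N ((w n).1.2 γ - xγ) ^ S.p < ε := by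
    intro γ
    apply (S.B γ).complete
    intro ε hε
    obtain ⟨n₀, h⟩ := hwF ε hε
    refine ⟨n₀, fun m hm n hn => ?_⟩
    have h2 := h m hm n hn
    have : (S.B γ).pnorm.N ((w m).1.2 γ - (w n).1.2 γ) ^ S.p ≤ S.F (w m - w n) := by
      have e : (w m - w n : S.D).1.2 γ = (w m).1.2 γ - (w n).1.2 γ := rfl
      rw [← e]; exact S.F_coord2 _ γ
    linarith
  choose x2 hx2 using hB
  set X : S.E.carrier × ∀ γ, (S.B γ).carrier := (x1, x2) with hX
  -- key claim: finite partial sums of the distance to X become small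
  have key : ∀ ε : ℝ, 0 < ε → ∃ n₀ : ℕ, ∀ n ≥ n₀, ∀ s : Finset S.Γ,
      S.E.pnorm.N (x1 - (w n).1.1) ^ S.p
        + ∑ γ ∈ s, (S.B γ).pnorm.N (x2 γ - (w n).1.2 γ) ^ S.p ≤ ε := by
    intro ε hε
    obtain ⟨n₀, h⟩ := hwF (ε / 2) (by linarith)
    refine ⟨n₀, fun n hn s => ?_⟩
    -- choose m large
    have hcard : (0 : ℝ) < ε / (2 * (s.card + 1)) := by positivity
    obtain ⟨m₁, hm₁⟩ := hx1 (ε / (2 * (s.card + 1))) hcard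
    have hms : ∀ γ ∈ s, ∃ mγ : ℕ, ∀ k ≥ mγ,
        (S.B γ).pnorm.N ((w k).1.2 γ - x2 γ) ^ S.p < ε / (2 * (s.card + 1)) := by
      intro γ _
      exact hx2 γ (ε / (2 * (s.card + 1))) hcard
    choose mγ hmγ using hms
    classical
    set m : ℕ := max (max m₁ n₀) (s.sup fun γ => if hγ : γ ∈ s then mγ γ hγ else 0) with hm
    have hmm₁ : m₁ ≤ m := le_trans (le_max_left _ _) (le_max_left _ _)
    have hmn₀ : n₀ ≤ m := le_trans (le_max_right _ _) (le_max_left _ _)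
    have hmγ' : ∀ γ (hγ : γ ∈ s), mγ γ hγ ≤ m := by
      intro γ hγ
      refine le_trans ?_ (le_max_right _ _)
      have := Finset.le_sup (f := fun γ => if hγ : γ ∈ s then mγ γ hγ else 0) hγ
      simpa [hγ] using this
    -- triangle through w m
    have tri1 : S.E.pnorm.N (x1 - (w n).1.1) ^ S.p
        ≤ S.E.pnorm.N (x1 - (w m).1.1) ^ S.p + S.E.pnorm.N ((w m).1.1 - (w n).1.1) ^ S.p := by
      have := S.pow_diff_le S.E.pnorm (x1 - (w n).1.1) ((w m).1.1 - (w n).1.1)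
      have e : x1 - (w n).1.1 - ((w m).1.1 - (w n).1.1) = x1 - (w m).1.1 := by abel
      rw [e] at this
      linarith
    have tri2 : ∀ γ ∈ s, (S.B γ).pnorm.N (x2 γ - (w n).1.2 γ) ^ S.p
        ≤ (S.B γ).pnorm.N (x2 γ - (w m).1.2 γ) ^ S.p
          + (S.B γ).pnorm.N ((w m).1.2 γ - (w n).1.2 γ) ^ S.p := by
      intro γ _
      have := S.pow_diff_le (S.B γ).pnorm (x2 γ - (w n).1.2 γ) ((w m).1.2 γ - (w n).1.2 γ)
      have e : x2 γ - (w n).1.2 γ - ((w m).1.2 γ - (w n).1.2 γ) = x2 γ - (w m).1.2 γ := by abel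
      rw [e] at this
      linarith
    -- the "w m" terms: bounded by F(w m - w n) < ε/2
    have hFmn : S.E.pnorm.N ((w m).1.1 - (w n).1.1) ^ S.p
        + ∑ γ ∈ s, (S.B γ).pnorm.N ((w m).1.2 γ - (w n).1.2 γ) ^ S.p ≤ ε / 2 := by
      have hsum : ∑ γ ∈ s, (S.B γ).pnorm.N ((w m).1.2 γ - (w n).1.2 γ) ^ S.p
          ≤ ∑' γ, (S.B γ).pnorm.N ((w m - w n : S.D).1.2 γ) ^ S.p := by
        have e : ∀ γ, (w m - w n : S.D).1.2 γ = (w m).1.2 γ - (w n).1.2 γ := fun _ => rfl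
        refine le_trans (le_of_eq ?_) (Summable.sum_le_tsum s
          (fun γ _ => Real.rpow_nonneg ((S.B γ).pnorm.nonneg _) _) (S.summ _))
        exact Finset.sum_congr rfl fun γ _ => by rw [e]
      have e1 : (w m - w n : S.D).1.1 = (w m).1.1 - (w n).1.1 := rfl
      have := h m hmn₀ n hn
      unfold F at this
      rw [e1] at this
      linarith
    -- the "error" terms: each < ε / (2(card+1))
    have herr : S.E.pnorm.N (x1 - (w m).1.1) ^ S.p
        + ∑ γ ∈ s, (S.B γ).pnorm.N (x2 γ - (w m).1.2 γ) ^ S.p ≤ ε / 2 := by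
      have h1 : S.E.pnorm.N (x1 - (w m).1.1) ^ S.p < ε / (2 * (s.card + 1)) := by
        rw [PNorm.sub_comm' S.E.pnorm]
        exact hm₁ m hmm₁
      have h2 : ∀ γ ∈ s, (S.B γ).pnorm.N (x2 γ - (w m).1.2 γ) ^ S.p
          < ε / (2 * (s.card + 1)) := by
        intro γ hγ
        rw [PNorm.sub_comm' (S.B γ).pnorm]
        exact hmγ γ hγ m (hmγ' γ hγ)
      have h3 : ∑ γ ∈ s, (S.B γ).pnorm.N (x2 γ - (w m).1.2 γ) ^ S.p
          ≤ s.card * (ε / (2 * (s.card + 1))) := by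
        refine le_trans (Finset.sum_le_card_nsmul s _ _ fun γ hγ => (h2 γ hγ).le) ?_
        simp [nsmul_eq_mul]
      have hc : (s.card : ℝ) + 1 > 0 := by positivity
      have : (s.card : ℝ) * (ε / (2 * (s.card + 1))) + ε / (2 * (s.card + 1)) = ε / 2 * ((s.card + 1) / (s.card + 1)) := by
        field_simp
      rw [div_self (ne_of_gt hc), mul_one] at this
      linarith
    have sumtri : ∑ γ ∈ s, (S.B γ).pnorm.N (x2 γ - (w n).1.2 γ) ^ S.p
        ≤ ∑ γ ∈ s, (S.B γ).pnorm.N (x2 γ - (w m).1.2 γ) ^ S.p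
          + ∑ γ ∈ s, (S.B γ).pnorm.N ((w m).1.2 γ - (w n).1.2 γ) ^ S.p := by
      rw [← Finset.sum_add_distrib]
      exact Finset.sum_le_sum tri2
    linarith
  -- membership of X in Dset
  obtain ⟨n₁, hn₁⟩ := key 1 one_pos
  have hsummdiff : ∀ n ≥ n₁, Summable fun γ => (S.B γ).pnorm.N (x2 γ - (w n).1.2 γ) ^ S.p := by
    intro n hn
    apply summable_of_sum_le (fun γ => Real.rpow_nonneg ((S.B γ).pnorm.nonneg _) _)
    intro s
    have := hn₁ n hn s
    have h0 := Real.rpow_nonneg (S.E.pnorm.nonneg (x1 - (w n).1.1)) S.p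
    show ∑ γ ∈ s, (S.B γ).pnorm.N (x2 γ - (w n).1.2 γ) ^ S.p ≤ (1 : ℝ)
    linarith
  have hXmem : X ∈ S.Dset := by
    have h1 := hsummdiff n₁ le_rfl
    have h2 := S.summ (w n₁)
    apply Summable.of_nonneg_of_le
      (fun γ => Real.rpow_nonneg ((S.B γ).pnorm.nonneg _) _)
      (fun γ => ?_) (h1.add h2)
    have e : X.2 γ = (x2 γ - (w n₁).1.2 γ) + (w n₁).1.2 γ := by simp [hX]
    rw [e]
    exact (S.B γ).pnorm.add_pow_le _ _
  set XD : S.D := ⟨X, hXmem⟩ with hXD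
  refine ⟨XD, fun ε hε => ?_⟩
  obtain ⟨n₀, h⟩ := key (ε / 2) (by linarith)
  refine ⟨max n₀ n₁, fun n hn => ?_⟩
  have hn0 : n ≥ n₀ := le_trans (le_max_left _ _) hn
  have hn1 : n ≥ n₁ := le_trans (le_max_right _ _) hn
  rw [S.ND_pow]
  have e1 : (w n - XD : S.D).1.1 = (w n).1.1 - x1 := rfl
  have e2 : ∀ γ, (w n - XD : S.D).1.2 γ = (w n).1.2 γ - x2 γ := fun _ => rfl
  have htsum : ∑' γ, (S.B γ).pnorm.N ((w n - XD : S.D).1.2 γ) ^ S.p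
      ≤ ε / 2 - S.E.pnorm.N (x1 - (w n).1.1) ^ S.p := by
    apply Summable.tsum_le_of_sum_le (S.summ _)
    intro s
    have := h n hn0 s
    have : ∑ γ ∈ s, (S.B γ).pnorm.N ((w n - XD : S.D).1.2 γ) ^ S.p
        = ∑ γ ∈ s, (S.B γ).pnorm.N (x2 γ - (w n).1.2 γ) ^ S.p := by
      refine Finset.sum_congr rfl fun γ _ => ?_
      rw [e2 γ, PNorm.sub_comm' (S.B γ).pnorm]
    rw [this]
    have := h n hn0 s
    linarith
  have hE' : S.E.pnorm.N ((w n - XD : S.D).1.1) ^ S.p = S.E.pnorm.N (x1 - (w n).1.1) ^ S.p := by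
    rw [e1, PNorm.sub_comm' S.E.pnorm]
  unfold F
  rw [hE']
  linarith
end Setup

namespace Setup
variable (S : Setup)

noncomputable instance instDecGamma : DecidableEq S.Γ := Classical.decEq _
noncomputable instance instDecA : ∀ (γ : S.Γ) (x : (S.A γ).carrier), Decidable (x ≠ 0) :=
  fun _ _ => Classical.dec _

/-- The graph map `a ↦ (∑ f γ (a γ), -u γ (a γ))`. -/
noncomputable def Psi : (Π₀ γ, (S.A γ).carrier) →ₗ[ℝ] S.D :=
  LinearMap.codRestrict S.Dset
    (LinearMap.prod ((DFinsupp.lsum ℕ) S.f)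
      (LinearMap.pi fun γ => -((S.u γ).comp (DFinsupp.lapply γ))))
    (by
      intro a
      classical
      haveI : DecidableEq S.Γ := Classical.decEq _
      show Summable _
      apply summable_of_ne_finset_zero (s := a.support)
      intro γ hγ
      have : a γ = 0 := DFinsupp.notMem_support_iff.mp hγ
      show (S.B γ).pnorm.N ((LinearMap.pi fun γ => -((S.u γ).comp (DFinsupp.lapply γ))) a γ) ^ S.p = 0
      rw [LinearMap.pi_apply]
      simp [this, PNorm.zero' (S.B γ).pnorm, Real.zero_rpow S.hp0.ne'])

lemma Psi_snd (a : Π₀ γ, (S.A γ).carrier) (γ : S.Γ) :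
    (S.Psi a).1.2 γ = -(S.u γ (a γ)) := rfl

lemma Psi_fst (a : Π₀ γ, (S.A γ).carrier) (s : Finset S.Γ) (hs : ∀ γ ∉ s, a γ = 0) :
    (S.Psi a).1.1 = ∑ γ ∈ s, S.f γ (a γ) := by
  have h : ((DFinsupp.lsum ℕ) S.f) a = ∑ γ ∈ s, S.f γ (a γ) := by
    rw [DFinsupp.lsum_apply_apply, DFinsupp.sumAddHom_apply, DFinsupp.sum]
    apply Finset.sum_subset
    · intro γ hγ
      by_contra h
      exact (DFinsupp.mem_support_iff.mp hγ) (hs γ h)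
    · intro γ _ hγ
      rw [DFinsupp.notMem_support_iff.mp hγ]
      exact map_zero _
  exact h

lemma F_sub_comm (x y : S.D) : S.F (x - y) = S.F (y - x) := by
  rw [← S.F_neg (x - y)]; congr 1; abel

lemma F_sum_le {ι : Type*} (s : Finset ι) (g : ι → S.D) :
    S.F (∑ i ∈ s, g i) ≤ ∑ i ∈ s, S.F (g i) := by
  have := PNorm.sum_le S.hp0 S.ND s g
  rw [S.ND_pow] at this
  refine le_trans this (le_of_eq (Finset.sum_congr rfl fun i _ => S.ND_pow (g i)))

/-- `K` is the closure of the range of `Psi`. -/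
def K : Submodule ℝ S.D where
  carrier := {x | ∀ ε : ℝ, 0 < ε → ∃ a, S.F (x - S.Psi a) < ε}
  zero_mem' := by
    intro ε hε
    exact ⟨0, by rw [map_zero, sub_zero, S.F_zero]; exact hε⟩
  add_mem' := by
    intro x y hx hy ε hε
    obtain ⟨a, ha⟩ := hx (ε / 2) (by linarith)
    obtain ⟨b, hb⟩ := hy (ε / 2) (by linarith)
    refine ⟨a + b, ?_⟩
    rw [map_add]
    have e : x + y - (S.Psi a + S.Psi b) = (x - S.Psi a) + (y - S.Psi b) := by abel
    rw [e]
    have := S.F_add_le (x - S.Psi a) (y - S.Psi b)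
    linarith
  smul_mem' := by
    intro c x hx ε hε
    by_cases hc : c = 0
    · subst hc
      refine ⟨0, ?_⟩
      rw [map_zero, zero_smul, sub_zero, S.F_zero]
      exact hε
    · have hcp : (0 : ℝ) < |c| ^ S.p :=
        Real.rpow_pos_of_pos (abs_pos.mpr hc) _
      obtain ⟨a, ha⟩ := hx (ε / (|c| ^ S.p)) (by positivity)
      refine ⟨c • a, ?_⟩
      rw [map_smul, ← smul_sub, S.F_smul]
      rw [lt_div_iff₀ hcp] at ha
      linarith [ha]

lemma Psi_mem_K (a : Π₀ γ, (S.A γ).carrier) : S.Psi a ∈ S.K := by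
  intro ε hε
  exact ⟨a, by rw [sub_self, S.F_zero]; exact hε⟩

/-- The quotient "p-th power of the norm". -/
noncomputable def q (x : S.D) : ℝ := sInf {r | ∃ k ∈ S.K, r = S.F (x + k)}

lemma q_set_nonempty (x : S.D) : {r | ∃ k ∈ S.K, r = S.F (x + k)}.Nonempty :=
  ⟨S.F (x + 0), 0, S.K.zero_mem, rfl⟩

lemma q_set_bdd (x : S.D) : BddBelow {r | ∃ k ∈ S.K, r = S.F (x + k)} :=
  ⟨0, by rintro r ⟨k, _, rfl⟩; exact S.F_nonneg _⟩

lemma q_le (x : S.D) {k : S.D} (hk : k ∈ S.K) : S.q x ≤ S.F (x + k) :=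
  csInf_le (S.q_set_bdd x) ⟨k, hk, rfl⟩

lemma le_q {c : ℝ} (x : S.D) (h : ∀ k ∈ S.K, c ≤ S.F (x + k)) : c ≤ S.q x :=
  le_csInf (S.q_set_nonempty x) (by rintro r ⟨k, hk, rfl⟩; exact h k hk)

lemma q_nonneg (x : S.D) : 0 ≤ S.q x := S.le_q x fun k _ => S.F_nonneg _

lemma q_lt {c : ℝ} (x : S.D) (h : S.q x < c) : ∃ k ∈ S.K, S.F (x + k) < c := by
  obtain ⟨r, ⟨k, hk, rfl⟩, hr⟩ := exists_lt_of_csInf_lt (S.q_set_nonempty x) h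
  exact ⟨k, hk, hr⟩

lemma q_le_F (x : S.D) : S.q x ≤ S.F x := by
  have := S.q_le x S.K.zero_mem
  rwa [add_zero] at this

lemma q_add_le (x y : S.D) : S.q (x + y) ≤ S.q x + S.q y := by
  have H : ∀ k ∈ S.K, ∀ l ∈ S.K, S.q (x + y) ≤ S.F (x + k) + S.F (y + l) := by
    intro k hk l hl
    have h1 : S.q (x + y) ≤ S.F (x + y + (k + l)) := S.q_le _ (S.K.add_mem hk hl)
    have e : x + y + (k + l) = (x + k) + (y + l) := by abel
    rw [e] at h1
    exact le_trans h1 (S.F_add_le _ _)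
  have H2 : ∀ k ∈ S.K, S.q (x + y) - S.F (x + k) ≤ S.q y := by
    intro k hk
    exact S.le_q y fun l hl => by have := H k hk l hl; linarith
  have H3 : S.q (x + y) - S.q y ≤ S.q x := by
    apply S.le_q x
    intro k hk
    have := H2 k hk
    linarith
  linarith

lemma q_smul_le (c : ℝ) (x : S.D) : S.q (c • x) ≤ |c| ^ S.p * S.q x := by
  by_cases hc : c = 0
  · subst hc
    rw [zero_smul]
    have h1 : S.q 0 ≤ 0 := by have := S.q_le_F 0; rw [S.F_zero] at this; exact this
    have h2 := S.q_nonneg (0 : S.D)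
    nlinarith [S.q_nonneg x, Real.rpow_nonneg (abs_nonneg (0:ℝ)) S.p]
  · have hcp : (0 : ℝ) < |c| ^ S.p := Real.rpow_pos_of_pos (abs_pos.mpr hc) _
    have H : ∀ k ∈ S.K, S.q (c • x) / |c| ^ S.p ≤ S.F (x + k) := by
      intro k hk
      have h1 : S.q (c • x) ≤ S.F (c • x + c • k) := S.q_le _ (S.K.smul_mem c hk)
      rw [← smul_add, S.F_smul] at h1
      rw [div_le_iff₀ hcp]
      linarith
    have := S.le_q x H
    rw [div_le_iff₀ hcp] at this
    linarith
lemma q_smul (c : ℝ) (x : S.D) : S.q (c • x) = |c| ^ S.p * S.q x := by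
  by_cases hc : c = 0
  · subst hc
    rw [zero_smul]
    have h1 : S.q 0 ≤ 0 := by have := S.q_le_F 0; rw [S.F_zero] at this; exact this
    have h2 := S.q_nonneg (0 : S.D)
    have : S.q (0 : S.D) = 0 := le_antisymm h1 h2
    rw [this, abs_zero, Real.zero_rpow S.hp0.ne', zero_mul]
  · refine le_antisymm (S.q_smul_le c x) ?_
    have := S.q_smul_le c⁻¹ (c • x)
    rw [inv_smul_smul₀ hc] at this
    have hcp : (0 : ℝ) < |c| ^ S.p := Real.rpow_pos_of_pos (abs_pos.mpr hc) _
    have hmul : |c| ^ S.p * |c⁻¹| ^ S.p = 1 := by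
      rw [← Real.mul_rpow (abs_nonneg _) (abs_nonneg _), abs_inv,
        mul_inv_cancel₀ (abs_ne_zero.mpr hc), Real.one_rpow]
    calc |c| ^ S.p * S.q x ≤ |c| ^ S.p * (|c⁻¹| ^ S.p * S.q (c • x)) := by
          exact mul_le_mul_of_nonneg_left this hcp.le
      _ = S.q (c • x) := by rw [← mul_assoc, hmul, one_mul]

lemma q_invariant {x y : S.D} (h : x - y ∈ S.K) : S.q x = S.q y := by
  have key : ∀ (x y : S.D), x - y ∈ S.K → S.q x ≤ S.q y := by
    intro x y h
    apply S.le_q y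
    intro l hl
    have h1 : S.q x ≤ S.F (x + (l - (x - y))) := S.q_le _ (S.K.sub_mem hl h)
    have e : x + (l - (x - y)) = y + l := by abel
    rwa [e] at h1
  refine le_antisymm (key x y h) (key y x ?_)
  have : y - x = -(x - y) := by abel
  rw [this]
  exact S.K.neg_mem h

end Setup

namespace Setup
variable (S : Setup)

abbrev Q := S.D ⧸ S.K

noncomputable def qbar (ξ : S.Q) : ℝ :=
  sInf {r | ∃ x : S.D, Submodule.Quotient.mk x = ξ ∧ r = S.q x}

lemma qbar_mk (x : S.D) : S.qbar (Submodule.Quotient.mk x) = S.q x := by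
  have e : {r | ∃ y : S.D, Submodule.Quotient.mk y = Submodule.Quotient.mk (p := S.K) x ∧ r = S.q y}
      = {S.q x} := by
    ext r
    simp only [Set.mem_setOf_eq, Set.mem_singleton_iff]
    constructor
    · rintro ⟨y, hy, rfl⟩
      exact S.q_invariant ((Submodule.Quotient.eq S.K).mp hy)
    · rintro rfl
      exact ⟨x, rfl, rfl⟩
  rw [qbar, e, csInf_singleton]

lemma qbar_nonneg (ξ : S.Q) : 0 ≤ S.qbar ξ := by
  obtain ⟨x, rfl⟩ := Submodule.Quotient.mk_surjective S.K ξ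
  rw [S.qbar_mk]
  exact S.q_nonneg x

lemma qbar_add_le (ξ η : S.Q) : S.qbar (ξ + η) ≤ S.qbar ξ + S.qbar η := by
  obtain ⟨x, rfl⟩ := Submodule.Quotient.mk_surjective S.K ξ
  obtain ⟨y, rfl⟩ := Submodule.Quotient.mk_surjective S.K η
  rw [← Submodule.Quotient.mk_add, S.qbar_mk, S.qbar_mk, S.qbar_mk]
  exact S.q_add_le x y

lemma q_eq_zero_iff (x : S.D) : S.q x = 0 ↔ x ∈ S.K := by
  constructor
  · intro h
    intro ε hε
    have h2 : S.q x < ε / 2 := by rw [h]; linarith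
    obtain ⟨k, hk, hFk⟩ := S.q_lt x h2
    obtain ⟨a, ha⟩ := hk (ε / 2) (by linarith)
    refine ⟨-a, ?_⟩
    rw [map_neg, sub_neg_eq_add]
    have e : x + S.Psi a = (x + k) + (S.Psi a - k) := by abel
    rw [e]
    have h3 := S.F_add_le (x + k) (S.Psi a - k)
    have h4 : S.F (S.Psi a - k) = S.F (k - S.Psi a) := S.F_sub_comm _ _
    linarith
  · intro h
    refine le_antisymm ?_ (S.q_nonneg x)
    by_contra hq
    push_neg at hq
    obtain ⟨a, ha⟩ := h (S.q x) hq
    have : S.q x ≤ S.F (x + S.Psi (-a)) := S.q_le x (S.Psi_mem_K (-a))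
    rw [map_neg] at this
    have e : x + -S.Psi a = x - S.Psi a := by abel
    rw [e] at this
    linarith

/-- The p-norm on the quotient. -/
noncomputable def NQ : PNorm S.p S.Q where
  N ξ := S.qbar ξ ^ (1 / S.p)
  nonneg ξ := Real.rpow_nonneg (S.qbar_nonneg ξ) _
  eq_zero_iff ξ := by
    obtain ⟨x, rfl⟩ := Submodule.Quotient.mk_surjective S.K ξ
    show S.qbar _ ^ (1 / S.p) = 0 ↔ _
    rw [S.qbar_mk,
      Real.rpow_eq_zero (S.q_nonneg x) (one_div_ne_zero S.hp0.ne'), S.q_eq_zero_iff,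
      Submodule.Quotient.mk_eq_zero]
  smul_eq a ξ := by
    obtain ⟨x, rfl⟩ := Submodule.Quotient.mk_surjective S.K ξ
    show S.qbar (a • Submodule.Quotient.mk x) ^ (1 / S.p) = |a| * S.qbar _ ^ (1 / S.p)
    rw [← Submodule.Quotient.mk_smul, S.qbar_mk, S.qbar_mk, S.q_smul,
      Real.mul_rpow (Real.rpow_nonneg (abs_nonneg _) _) (S.q_nonneg x),
      ← Real.rpow_mul (abs_nonneg a), mul_one_div_cancel S.hp0.ne', Real.rpow_one]
  add_pow_le ξ η := by
    show (S.qbar (ξ + η) ^ (1 / S.p)) ^ S.p ≤ (S.qbar ξ ^ (1 / S.p)) ^ S.p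
      + (S.qbar η ^ (1 / S.p)) ^ S.p
    rw [← Real.rpow_mul (S.qbar_nonneg _), ← Real.rpow_mul (S.qbar_nonneg _),
      ← Real.rpow_mul (S.qbar_nonneg _), one_div_mul_cancel S.hp0.ne',
      Real.rpow_one, Real.rpow_one, Real.rpow_one]
    exact S.qbar_add_le ξ η

lemma NQ_pow (ξ : S.Q) : S.NQ.N ξ ^ S.p = S.qbar ξ := by
  show (S.qbar ξ ^ (1 / S.p)) ^ S.p = S.qbar ξ
  rw [← Real.rpow_mul (S.qbar_nonneg ξ), one_div_mul_cancel S.hp0.ne', Real.rpow_one]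

lemma exists_rep_lt (ξ : S.Q) {c : ℝ} (h : S.qbar ξ < c) :
    ∃ x : S.D, Submodule.Quotient.mk x = ξ ∧ S.F x < c := by
  obtain ⟨x, rfl⟩ := Submodule.Quotient.mk_surjective S.K ξ
  rw [S.qbar_mk] at h
  obtain ⟨k, hk, hFk⟩ := S.q_lt x h
  refine ⟨x + k, ?_, hFk⟩
  rw [Submodule.Quotient.mk_add, (Submodule.Quotient.mk_eq_zero _).mpr hk, add_zero]

lemma Q_complete : IsCompleteP S.p S.NQ := by
  intro v hv
  have hvq : ∀ ε : ℝ, 0 < ε → ∃ n₀ : ℕ, ∀ m ≥ n₀, ∀ n ≥ n₀, S.qbar (v m - v n) < ε := by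
    intro ε hε
    obtain ⟨n₀, h⟩ := hv ε hε
    exact ⟨n₀, fun m hm n hn => by have := h m hm n hn; rwa [S.NQ_pow] at this⟩
  have H : ∀ k : ℕ, ∃ n₀ : ℕ, ∀ m ≥ n₀, ∀ n ≥ n₀, S.qbar (v m - v n) < (1/2 : ℝ) ^ k :=
    fun k => hvq _ (by positivity)
  choose g hg using H
  -- monotone sequence of indices
  let Ns : ℕ → ℕ := fun k => Nat.rec (g 0) (fun k ih => max ih (g (k + 1))) k
  have hNs_mono : ∀ k, Ns k ≤ Ns (k + 1) := fun k => le_max_left _ _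
  have hNs_ge : ∀ k, g k ≤ Ns k := by
    intro k
    cases k with
    | zero => exact le_rfl
    | succ k => exact le_max_right _ _
  -- lifts of consecutive differences
  have hz : ∀ k : ℕ, ∃ z : S.D,
      Submodule.Quotient.mk z = v (Ns (k + 1)) - v (Ns k) ∧ S.F z < (1/2 : ℝ) ^ k := by
    intro k
    exact S.exists_rep_lt _ (hg k _ (le_trans (hNs_ge k) (hNs_mono k)) _ (hNs_ge k))
  choose z hz1 hz2 using hz
  obtain ⟨w0, hw0⟩ := Submodule.Quotient.mk_surjective S.K (v (Ns 0))
  set W : ℕ → S.D := fun k => w0 + ∑ j ∈ Finset.range k, z j with hW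
  have hWmk : ∀ k, (Submodule.Quotient.mk (W k) : S.Q) = v (Ns k) := by
    intro k
    show S.K.mkQ (w0 + ∑ j ∈ Finset.range k, z j) = v (Ns k)
    rw [map_add, map_sum]
    have e2 : ∀ j, S.K.mkQ (z j) = v (Ns (j + 1)) - v (Ns j) := fun j => by
      rw [Submodule.mkQ_apply, hz1]
    rw [Finset.sum_congr rfl fun j _ => e2 j, Finset.sum_range_sub fun j => v (Ns j),
      Submodule.mkQ_apply, hw0]
    abel
  have hWdiff : ∀ k m, k ≤ m → S.F (W m - W k) ≤ 2 * (1/2 : ℝ) ^ k := by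
    intro k m hkm
    have e : W m - W k = ∑ j ∈ Finset.Ico k m, z j := by
      show (w0 + ∑ j ∈ Finset.range m, z j) - (w0 + ∑ j ∈ Finset.range k, z j) = _
      rw [Finset.sum_Ico_eq_sub _ hkm]
      abel
    rw [e]
    refine le_trans (S.F_sum_le _ _) ?_
    have h1 : ∑ j ∈ Finset.Ico k m, S.F (z j) ≤ ∑ j ∈ Finset.Ico k m, (1/2 : ℝ) ^ j :=
      Finset.sum_le_sum fun j _ => (hz2 j).le
    have h2 : ∑ j ∈ Finset.Ico k m, (1/2 : ℝ) ^ j ≤ 2 * (1/2 : ℝ) ^ k := by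
      rw [Finset.sum_Ico_eq_sum_range]
      have e3 : ∀ i, (1/2 : ℝ) ^ (k + i) = (1/2 : ℝ) ^ k * (1/2 : ℝ) ^ i := fun i => pow_add _ _ _
      rw [Finset.sum_congr rfl fun i _ => e3 i, ← Finset.mul_sum]
      have h4 := sum_geometric_two_le (m - k)
      have h5 : (0 : ℝ) ≤ (1/2 : ℝ) ^ k := by positivity
      nlinarith
    linarith
  have hpow_anti : ∀ k m : ℕ, k ≤ m → (1/2 : ℝ) ^ m ≤ (1/2 : ℝ) ^ k := fun k m h =>
    pow_le_pow_of_le_one (by norm_num) (by norm_num) h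
  have hWC : ∀ ε : ℝ, 0 < ε → ∃ k₀ : ℕ, ∀ m ≥ k₀, ∀ n ≥ k₀, S.ND.N (W m - W n) ^ S.p < ε := by
    intro ε hε
    obtain ⟨k₀, hk₀⟩ := exists_pow_lt_of_lt_one (show (0:ℝ) < ε/2 by linarith)
      (show (1/2 : ℝ) < 1 by norm_num)
    refine ⟨k₀, fun m hm n hn => ?_⟩
    rw [S.ND_pow]
    rcases le_total n m with h | h
    · have := hWdiff n m h
      have := hpow_anti k₀ n hn
      linarith
    · have := hWdiff m n h
      have := hpow_anti k₀ m hm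
      rw [S.F_sub_comm]
      linarith
  obtain ⟨X, hX⟩ := S.D_complete W hWC
  refine ⟨Submodule.Quotient.mk X, fun ε hε => ?_⟩
  obtain ⟨k₁, hk₁⟩ := hX (ε / 2) (by linarith)
  obtain ⟨k₂, hk₂⟩ := exists_pow_lt_of_lt_one (show (0:ℝ) < ε/2 by linarith)
    (show (1/2 : ℝ) < 1 by norm_num)
  set k := max k₁ k₂ with hk
  refine ⟨g k, fun n hn => ?_⟩
  rw [S.NQ_pow]
  have tri : S.qbar (v n - Submodule.Quotient.mk X)
      ≤ S.qbar (v n - v (Ns k)) + S.qbar (v (Ns k) - Submodule.Quotient.mk X) := by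
    have h := S.qbar_add_le (v n - v (Ns k)) (v (Ns k) - Submodule.Quotient.mk X)
    have e : v n - v (Ns k) + (v (Ns k) - Submodule.Quotient.mk X)
        = v n - Submodule.Quotient.mk X := by abel
    rwa [e] at h
  have b1 : S.qbar (v n - v (Ns k)) < ε / 2 := by
    have h1 := hg k n hn (Ns k) (hNs_ge k)
    have h2 := hpow_anti k₂ k (le_max_right _ _)
    linarith
  have b2 : S.qbar (v (Ns k) - Submodule.Quotient.mk X) < ε / 2 := by
    rw [← hWmk k, ← Submodule.Quotient.mk_sub, S.qbar_mk]
    have h1 := S.q_le_F (W k - X)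
    have h2 := hk₁ k (le_max_left _ _)
    rw [S.ND_pow] at h2
    linarith
  linarith

end Setup

namespace Setup
variable (S : Setup)

lemma F_eq (d : S.D) :
    S.F d = S.E.pnorm.N d.1.1 ^ S.p + ∑' γ, (S.B γ).pnorm.N (d.1.2 γ) ^ S.p := rfl

/-- The inclusion `E → D`. -/
noncomputable def inc1 : S.E.carrier →ₗ[ℝ] S.D :=
  LinearMap.codRestrict S.Dset (LinearMap.inl ℝ _ _)
    (by
      intro x
      show Summable _
      apply summable_of_ne_finset_zero (s := (∅ : Finset S.Γ))
      intro γ _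
      show (S.B γ).pnorm.N ((0 : ∀ γ, (S.B γ).carrier) γ) ^ S.p = 0
      simp [PNorm.zero' (S.B γ).pnorm, Real.zero_rpow S.hp0.ne'])

lemma inc1_fst (x : S.E.carrier) : (S.inc1 x).1.1 = x := rfl
lemma inc1_snd (x : S.E.carrier) (γ : S.Γ) : (S.inc1 x).1.2 γ = 0 := rfl

noncomputable def iota : S.E.carrier →ₗ[ℝ] S.Q := S.K.mkQ ∘ₗ S.inc1

/-- The inclusion `B γ → D`. -/
noncomputable def fpre (γ : S.Γ) : (S.B γ).carrier →ₗ[ℝ] S.D :=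
  LinearMap.codRestrict S.Dset
    ((LinearMap.inr ℝ S.E.carrier _) ∘ₗ (LinearMap.single ℝ (fun γ => (S.B γ).carrier) γ))
    (by
      intro b
      show Summable _
      apply summable_of_ne_finset_zero (s := ({γ} : Finset S.Γ))
      intro γ' hγ'
      have hne : γ' ≠ γ := by simpa using hγ'
      show (S.B γ').pnorm.N (Pi.single (M := fun γ => (S.B γ).carrier) γ b γ') ^ S.p = 0
      rw [Pi.single_eq_of_ne hne]
      simp [PNorm.zero' (S.B γ').pnorm, Real.zero_rpow S.hp0.ne'])

lemma fpre_fst (γ : S.Γ) (b : (S.B γ).carrier) : (S.fpre γ b).1.1 = 0 := rfl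
lemma fpre_snd (γ : S.Γ) (b : (S.B γ).carrier) (γ' : S.Γ) :
    (S.fpre γ b).1.2 γ' = Pi.single (M := fun γ => (S.B γ).carrier) γ b γ' := rfl

noncomputable def fprime (γ : S.Γ) : (S.B γ).carrier →ₗ[ℝ] S.Q := S.K.mkQ ∘ₗ S.fpre γ

/-- Lower bounds valid on the range of `Psi` pass to the closure `K`. -/
lemma le_q_of_forall (d : S.D) {c : ℝ} (h : ∀ a, c ≤ S.F (d + S.Psi a)) : c ≤ S.q d := by
  apply S.le_q d
  intro k hk
  by_contra hlt
  push_neg at hlt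
  obtain ⟨a, ha⟩ := hk (c - S.F (d + k)) (by linarith)
  have h1 := h a
  have e : d + S.Psi a = (d + k) + (S.Psi a - k) := by abel
  rw [e] at h1
  have h2 := S.F_add_le (d + k) (S.Psi a - k)
  have h3 : S.F (S.Psi a - k) = S.F (k - S.Psi a) := S.F_sub_comm _ _
  linarith

lemma rpow_inv_pow {x : ℝ} (hx : 0 ≤ x) : (x ^ S.p) ^ (1 / S.p) = x := by
  rw [← Real.rpow_mul hx, mul_one_div_cancel S.hp0.ne', Real.rpow_one]

/-- Isometry of ι, lower bound part. -/
lemma iota_lb (x : S.E.carrier) (a : Π₀ γ, (S.A γ).carrier) :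
    S.E.pnorm.N x ^ S.p ≤ S.F (S.inc1 x + S.Psi a) := by
  classical
  set s := a.support with hsdef
  have hs : ∀ γ ∉ s, a γ = 0 := fun γ h => DFinsupp.notMem_support_iff.mp h
  set t : S.E.carrier := ∑ γ ∈ s, S.f γ (a γ) with ht
  have e1 : (S.inc1 x + S.Psi a).1.1 = x + t := by
    show (S.inc1 x).1.1 + (S.Psi a).1.1 = x + t
    rw [S.inc1_fst, S.Psi_fst a s hs]
  have e2 : ∀ γ, (S.inc1 x + S.Psi a).1.2 γ = -(S.u γ (a γ)) := by
    intro γ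
    show (S.inc1 x).1.2 γ + (S.Psi a).1.2 γ = _
    rw [S.inc1_snd, S.Psi_snd, zero_add]
  have etsum : ∑' γ, (S.B γ).pnorm.N ((S.inc1 x + S.Psi a).1.2 γ) ^ S.p
      = ∑ γ ∈ s, (S.A γ).pnorm.N (a γ) ^ S.p := by
    rw [tsum_eq_sum (s := s) (fun γ hγ => by
      rw [e2 γ, hs γ hγ, map_zero, neg_zero, PNorm.zero' (S.B γ).pnorm,
        Real.zero_rpow S.hp0.ne'])]
    exact Finset.sum_congr rfl fun γ _ => by rw [e2 γ, PNorm.neg' (S.B γ).pnorm, S.hu]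
  have h1 : S.E.pnorm.N x ^ S.p ≤ S.E.pnorm.N (x + t) ^ S.p + S.E.pnorm.N t ^ S.p := by
    have := PNorm.rev_tri S.hp0 S.E.pnorm x (-t)
    rwa [sub_neg_eq_add, PNorm.neg' S.E.pnorm] at this
  have h2 : S.E.pnorm.N t ^ S.p ≤ ∑ γ ∈ s, (S.A γ).pnorm.N (a γ) ^ S.p := by
    refine le_trans (PNorm.sum_le S.hp0 S.E.pnorm s _) (Finset.sum_le_sum fun γ _ => ?_)
    exact Real.rpow_le_rpow (S.E.pnorm.nonneg _) (S.hf γ (a γ)) S.hp0.le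
  rw [S.F_eq, e1, etsum]
  linarith

lemma iota_isometry (x : S.E.carrier) : S.NQ.N (S.iota x) = S.E.pnorm.N x := by
  have hq : S.q (S.inc1 x) = S.E.pnorm.N x ^ S.p := by
    refine le_antisymm ?_ (S.le_q_of_forall _ fun a => S.iota_lb x a)
    refine le_trans (S.q_le_F _) (le_of_eq ?_)
    rw [S.F_eq, S.inc1_fst]
    rw [tsum_eq_sum (s := (∅ : Finset S.Γ)) (fun γ _ => by
      rw [S.inc1_snd, PNorm.zero' (S.B γ).pnorm, Real.zero_rpow S.hp0.ne'])]
    simp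
  show S.qbar (Submodule.Quotient.mk (S.inc1 x)) ^ (1 / S.p) = _
  rw [S.qbar_mk, hq, S.rpow_inv_pow (S.E.pnorm.nonneg x)]

lemma q_fpre_le (γ : S.Γ) (b : (S.B γ).carrier) :
    S.q (S.fpre γ b) ≤ (S.B γ).pnorm.N b ^ S.p := by
  refine le_trans (S.q_le_F _) (le_of_eq ?_)
  classical
  rw [S.F_eq, S.fpre_fst, PNorm.zero' S.E.pnorm, Real.zero_rpow S.hp0.ne']
  rw [tsum_eq_sum (s := ({γ} : Finset S.Γ)) (fun γ' hγ' => by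
    have hne : γ' ≠ γ := by simpa using hγ'
    rw [S.fpre_snd, Pi.single_eq_of_ne hne, PNorm.zero' (S.B γ').pnorm,
      Real.zero_rpow S.hp0.ne'])]
  rw [Finset.sum_singleton, S.fpre_snd, Pi.single_eq_same, zero_add]

lemma fprime_nonexpansive (γ : S.Γ) (b : (S.B γ).carrier) :
    S.NQ.N (S.fprime γ b) ≤ (S.B γ).pnorm.N b := by
  show S.qbar (Submodule.Quotient.mk (S.fpre γ b)) ^ (1 / S.p) ≤ _
  rw [S.qbar_mk]
  calc S.q (S.fpre γ b) ^ (1 / S.p) ≤ ((S.B γ).pnorm.N b ^ S.p) ^ (1 / S.p) :=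
        Real.rpow_le_rpow (S.q_nonneg _) (S.q_fpre_le γ b) (one_div_nonneg.mpr S.hp0.le)
    _ = (S.B γ).pnorm.N b := S.rpow_inv_pow ((S.B γ).pnorm.nonneg b)

lemma fprime_comm (γ : S.Γ) (a : (S.A γ).carrier) :
    S.fprime γ (S.u γ a) = S.iota (S.f γ a) := by
  show Submodule.Quotient.mk (S.fpre γ (S.u γ a)) = Submodule.Quotient.mk (S.inc1 (S.f γ a))
  rw [Submodule.Quotient.eq]
  have key : S.fpre γ (S.u γ a) - S.inc1 (S.f γ a) = -(S.Psi (DFinsupp.single γ a)) := by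
    classical
    apply Subtype.ext
    apply Prod.ext
    · show (S.fpre γ (S.u γ a)).1.1 - (S.inc1 (S.f γ a)).1.1 = -((S.Psi _).1.1)
      rw [S.fpre_fst, S.inc1_fst, S.Psi_fst (DFinsupp.single γ a) ({γ} : Finset S.Γ)
        (fun γ' hγ' => DFinsupp.single_eq_of_ne (fun h => by simp [h] at hγ'))]
      rw [Finset.sum_singleton, DFinsupp.single_eq_same, zero_sub]
    · funext γ'
      show (S.fpre γ (S.u γ a)).1.2 γ' - (S.inc1 (S.f γ a)).1.2 γ' = -((S.Psi _).1.2 γ')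
      rw [S.fpre_snd, S.inc1_snd, S.Psi_snd, sub_zero, neg_neg]
      by_cases h : γ' = γ
      · subst h
        rw [Pi.single_eq_same, DFinsupp.single_eq_same]
      · rw [Pi.single_eq_of_ne h, DFinsupp.single_eq_of_ne h, map_zero]
  rw [key]
  exact S.K.neg_mem (S.Psi_mem_K _)

lemma fprime_lb (γ : S.Γ) {ε : ℝ} (hε0 : 0 ≤ ε) (hε1 : ε < 1)
    (hiso : ∀ a : (S.A γ).carrier, (1 - ε) * (S.A γ).pnorm.N a ≤ S.E.pnorm.N (S.f γ a))
    (b : (S.B γ).carrier) (a : Π₀ γ, (S.A γ).carrier) :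
    (1 - ε) ^ S.p * (S.B γ).pnorm.N b ^ S.p ≤ S.F (S.fpre γ b + S.Psi a) := by
  classical
  set s := insert γ a.support with hsdef
  have hs : ∀ γ' ∉ s, a γ' = 0 := fun γ' h =>
    DFinsupp.notMem_support_iff.mp fun hc => h (Finset.mem_insert_of_mem hc)
  set t : S.E.carrier := ∑ γ' ∈ s, S.f γ' (a γ') with ht
  have e1 : (S.fpre γ b + S.Psi a).1.1 = t := by
    show (S.fpre γ b).1.1 + (S.Psi a).1.1 = t
    rw [S.fpre_fst, S.Psi_fst a s hs, zero_add]
  have e2 : ∀ γ', (S.fpre γ b + S.Psi a).1.2 γ'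
      = Pi.single (M := fun γ => (S.B γ).carrier) γ b γ' - S.u γ' (a γ') := by
    intro γ'
    show (S.fpre γ b).1.2 γ' + (S.Psi a).1.2 γ' = _
    rw [S.fpre_snd, S.Psi_snd, sub_eq_add_neg]
  set r : ℝ := (S.A γ).pnorm.N (a γ) with hr
  set m : ℝ := (S.B γ).pnorm.N (b - S.u γ (a γ)) ^ S.p with hm
  set T : ℝ := ∑ γ' ∈ s.erase γ, (S.A γ').pnorm.N (a γ') ^ S.p with hT
  have etsum : ∑' γ', (S.B γ').pnorm.N ((S.fpre γ b + S.Psi a).1.2 γ') ^ S.p = m + T := by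
    rw [tsum_eq_sum (s := s) (fun γ' hγ' => by
      have hne : γ' ≠ γ := fun h => hγ' (h ▸ Finset.mem_insert_self γ _)
      rw [e2 γ', Pi.single_eq_of_ne hne, hs γ' hγ', map_zero, zero_sub, neg_zero,
        PNorm.zero' (S.B γ').pnorm, Real.zero_rpow S.hp0.ne'])]
    rw [← Finset.add_sum_erase s _ (Finset.mem_insert_self γ _)]
    congr 1
    · rw [e2 γ, Pi.single_eq_same]
    · refine Finset.sum_congr rfl fun γ' hγ' => ?_
      have hne : γ' ≠ γ := Finset.ne_of_mem_erase hγ'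
      rw [e2 γ', Pi.single_eq_of_ne hne, zero_sub, PNorm.neg' (S.B γ').pnorm, S.hu]
  -- main chain
  have h1 : S.E.pnorm.N (S.f γ (a γ)) ^ S.p ≤ S.E.pnorm.N t ^ S.p + T := by
    have hsplit : t = S.f γ (a γ) + ∑ γ' ∈ s.erase γ, S.f γ' (a γ') := by
      rw [ht, ← Finset.add_sum_erase s _ (Finset.mem_insert_self γ _)]
    have htri : S.E.pnorm.N (S.f γ (a γ)) ^ S.p
        ≤ S.E.pnorm.N t ^ S.p + S.E.pnorm.N (∑ γ' ∈ s.erase γ, S.f γ' (a γ')) ^ S.p := by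
      have := PNorm.rev_tri S.hp0 S.E.pnorm (S.f γ (a γ))
        (-(∑ γ' ∈ s.erase γ, S.f γ' (a γ')))
      rw [sub_neg_eq_add, ← hsplit, PNorm.neg' S.E.pnorm] at this
      exact this
    have hsum : S.E.pnorm.N (∑ γ' ∈ s.erase γ, S.f γ' (a γ')) ^ S.p ≤ T := by
      refine le_trans (PNorm.sum_le S.hp0 S.E.pnorm _ _) (Finset.sum_le_sum fun γ' _ => ?_)
      exact Real.rpow_le_rpow (S.E.pnorm.nonneg _) (S.hf γ' (a γ')) S.hp0.le
    linarith
  have h2 : (1 - ε) ^ S.p * r ^ S.p ≤ S.E.pnorm.N (S.f γ (a γ)) ^ S.p := by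
    have := hiso (a γ)
    calc (1 - ε) ^ S.p * r ^ S.p = ((1 - ε) * r) ^ S.p := by
          rw [Real.mul_rpow (by linarith) ((S.A γ).pnorm.nonneg _)]
      _ ≤ S.E.pnorm.N (S.f γ (a γ)) ^ S.p :=
          Real.rpow_le_rpow (mul_nonneg (by linarith) ((S.A γ).pnorm.nonneg _)) this S.hp0.le
  have h3 : (S.B γ).pnorm.N b ^ S.p ≤ m + r ^ S.p := by
    have := PNorm.rev_tri S.hp0 (S.B γ).pnorm b (S.u γ (a γ))
    rwa [S.hu] at this
  have h4 : (1 - ε) ^ S.p ≤ 1 := Real.rpow_le_one (by linarith) (by linarith) S.hp0.le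
  have h5 : (1 - ε) ^ S.p * (S.B γ).pnorm.N b ^ S.p ≤ (1 - ε) ^ S.p * (m + r ^ S.p) :=
    mul_le_mul_of_nonneg_left h3 (Real.rpow_nonneg (by linarith) _)
  have hm0 : 0 ≤ m := Real.rpow_nonneg ((S.B γ).pnorm.nonneg _) _
  have h6 : (1 - ε) ^ S.p * m ≤ m := by nlinarith
  rw [S.F_eq, e1, etsum]
  nlinarith [Real.rpow_nonneg (show (0:ℝ) ≤ 1 - ε by linarith) S.p]

end Setup


end PGurarii

namespace PGurarii

/-- the simultaneous extension lemma: given a family of isometries `u γ : A γ → B γ`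
and nonexpansive operators `f γ : A γ → E`, there are a `p`-Banach space `E'` and an isometry
`ι : E → E'` such that each `f γ` extends through `u γ` to a nonexpansive `f' γ : B γ → E'`;
moreover `f' γ` is an `ε`-isometry whenever `f γ` is. -/
theorem statement5 (p : ℝ) (hp0 : 0 < p) (hp1 : p ≤ 1)
    (E : PBanach p) (Γ : Type) (A B : Γ → PBanach p)
    (u : ∀ γ : Γ, (A γ).carrier →ₗ[ℝ] (B γ).carrier)
    (hu : ∀ (γ : Γ) (a : (A γ).carrier), (B γ).pnorm.N (u γ a) = (A γ).pnorm.N a)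
    (f : ∀ γ : Γ, (A γ).carrier →ₗ[ℝ] E.carrier)
    (hf : ∀ (γ : Γ) (a : (A γ).carrier), E.pnorm.N (f γ a) ≤ (A γ).pnorm.N a) :
    ∃ (E' : PBanach p) (ι : E.carrier →ₗ[ℝ] E'.carrier),
      (∀ x, E'.pnorm.N (ι x) = E.pnorm.N x) ∧
      ∀ γ : Γ, ∃ f' : (B γ).carrier →ₗ[ℝ] E'.carrier,
        (∀ b, E'.pnorm.N (f' b) ≤ (B γ).pnorm.N b) ∧
        (∀ a, f' (u γ a) = ι (f γ a)) ∧
        (∀ ε : ℝ, 0 ≤ ε → ε < 1 →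
          (∀ a, (1 - ε) * (A γ).pnorm.N a ≤ E.pnorm.N (f γ a) ∧
            E.pnorm.N (f γ a) ≤ (1 + ε) * (A γ).pnorm.N a) →
          ∀ b, (1 - ε) * (B γ).pnorm.N b ≤ E'.pnorm.N (f' b) ∧
            E'.pnorm.N (f' b) ≤ (1 + ε) * (B γ).pnorm.N b) := by
  set S : Setup := ⟨p, hp0, hp1, E, Γ, A, B, u, hu, f, hf⟩ with hS
  refine ⟨⟨S.Q, S.NQ, S.Q_complete⟩, S.iota, fun x => S.iota_isometry x, fun γ => ?_⟩
  refine ⟨S.fprime γ, fun b => S.fprime_nonexpansive γ b, fun a => S.fprime_comm γ a, ?_⟩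
  intro ε hε0 hε1 hiso b
  constructor
  · -- lower bound
    have hq : (1 - ε) ^ S.p * (S.B γ).pnorm.N b ^ S.p ≤ S.q (S.fpre γ b) :=
      S.le_q_of_forall _ fun a => S.fprime_lb γ hε0 hε1 (fun a' => (hiso a').1) b a
    have hNb := (S.B γ).pnorm.nonneg b
    have key : (1 - ε) * (S.B γ).pnorm.N b ≤ S.NQ.N (S.fprime γ b) := by
      show _ ≤ S.qbar (Submodule.Quotient.mk (S.fpre γ b)) ^ (1 / S.p)
      rw [S.qbar_mk]
      calc (1 - ε) * (S.B γ).pnorm.N b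
          = (((1 - ε) * (S.B γ).pnorm.N b) ^ S.p) ^ (1 / S.p) :=
            (S.rpow_inv_pow (by nlinarith)).symm
        _ = ((1 - ε) ^ S.p * (S.B γ).pnorm.N b ^ S.p) ^ (1 / S.p) := by
            rw [Real.mul_rpow (by linarith) hNb]
        _ ≤ S.q (S.fpre γ b) ^ (1 / S.p) :=
            Real.rpow_le_rpow
              (mul_nonneg (Real.rpow_nonneg (by linarith) _) (Real.rpow_nonneg hNb _)) hq
              (one_div_nonneg.mpr S.hp0.le)
    exact key
  · have h1 := S.fprime_nonexpansive γ b
    have hNb := (S.B γ).pnorm.nonneg b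
    nlinarith


end PGurarii
end
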